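/- arXiv:1801.09480 — 11 statements merged into one kernel-verified Lean document; each statement's English description precedes it below -/
import Mathlib

section
/- Let G be a finite abelian (additive) group, let A ⊆ G be a symmetric subset (A = -A) with 0 ∈ A, and let B ⊆ G be a subset such that b - b' ∉ A for all distinct b, b' ∈ B. Suppose f : G → ℝ satisfies: f(x) ≤ 0 for every x ∉ A; for every additive character γ : G → ℂ the sum Σ_{x ∈ G} γ(x)·f(x) is a nonnegative real number; and Σ_{x ∈ G} f(x) > 0. Then |B| · (Σ_{x ∈ G} f(x)) ≤ f(0) · |G|. -/
open ComplexOrder in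
theorem delsarte_aux {G : Type*} [AddCommGroup G] [Fintype G]
    (A : Set G)
    (B : Finset G) (hBne : B.Nonempty)
    (hB : ∀ b ∈ B, ∀ b' ∈ B, b ≠ b' → b - b' ∉ A)
    (f : G → ℝ)
    (hf_nonpos : ∀ x ∉ A, f x ≤ 0)
    (hf_hat : ∀ γ : AddChar G ℂ, 0 ≤ ∑ x : G, γ x * (f x : ℂ)) :
    (B.card : ℝ) * (∑ x : G, f x) ≤ f 0 * (Fintype.card G : ℝ) := by
  classical
  set n := Fintype.card G
  set F : ℝ := ∑ x : G, f x with hF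
  set D : ℝ := ∑ b ∈ B, ∑ b' ∈ B, f (b' - b) with hD
  -- Step C: the key Fourier identity
  have key : (∑ γ : AddChar G ℂ, (∑ x : G, γ x * (f x : ℂ)) *
      ((∑ b ∈ B, γ b) * (starRingEnd ℂ) (∑ b ∈ B, γ b))) = ((n : ℝ) * D : ℝ) := by
    have : ∀ γ : AddChar G ℂ, (∑ x : G, γ x * (f x : ℂ)) *
        ((∑ b ∈ B, γ b) * (starRingEnd ℂ) (∑ b ∈ B, γ b)) =
        ∑ x : G, ∑ b ∈ B, ∑ b' ∈ B, (f x : ℂ) * γ (x + b - b') := by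
      intro γ
      rw [map_sum, Finset.sum_mul_sum, Finset.sum_mul]
      simp_rw [Finset.mul_sum]
      refine Finset.sum_congr rfl fun x _ => Finset.sum_congr rfl fun b _ =>
        Finset.sum_congr rfl fun b' _ => ?_
      have h1 : γ (x + b - b') = γ x * γ b * γ (-b') := by
        rw [sub_eq_add_neg, AddChar.map_add_eq_mul, AddChar.map_add_eq_mul]
      rw [← AddChar.map_neg_eq_conj, h1]
      ring
    simp_rw [this]
    rw [Finset.sum_comm]
    have swap : ∀ x : G, ∑ γ : AddChar G ℂ, ∑ b ∈ B, ∑ b' ∈ B, (f x : ℂ) * γ (x + b - b')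
        = ∑ b ∈ B, ∑ b' ∈ B, (f x : ℂ) * ∑ γ : AddChar G ℂ, γ (x + b - b') := by
      intro x
      rw [Finset.sum_comm]
      exact Finset.sum_congr rfl fun b _ => by rw [Finset.sum_comm]; simp [Finset.mul_sum]
    simp_rw [swap, AddChar.sum_apply_eq_ite]
    rw [hD]
    push_cast
    rw [Finset.sum_comm, Finset.mul_sum]
    refine Finset.sum_congr rfl fun b _ => ?_
    rw [Finset.mul_sum, Finset.sum_comm]
    refine Finset.sum_congr rfl fun b' _ => ?_
    rw [Finset.sum_eq_single (b' - b)]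
    · simp [mul_comm]; exact Or.inl rfl
    · intro x _ hx
      rw [if_neg, mul_zero]
      intro h
      exact hx (by linear_combination (norm := abel) h)
    · simp
  -- Step B: lower bound by trivial character
  have lower : ((B.card : ℝ) * (B.card : ℝ) * F : ℝ) ≤ ((n : ℝ) * D : ℝ) := by
    rw [← Complex.real_le_real, ← key]
    have h0' : ((B.card : ℝ) * (B.card : ℝ) * F : ℝ) = (∑ x : G, (0 : AddChar G ℂ) x * (f x : ℂ)) *
        ((∑ b ∈ B, (0 : AddChar G ℂ) b) * (starRingEnd ℂ) (∑ b ∈ B, (0 : AddChar G ℂ) b)) := by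
      simp [hF]
      push_cast
      ring
    rw [h0']
    refine Finset.single_le_sum (f := fun γ : AddChar G ℂ => (∑ x : G, γ x * (f x : ℂ)) *
        ((∑ b ∈ B, γ b) * (starRingEnd ℂ) (∑ b ∈ B, γ b))) (fun γ _ => ?_) (Finset.mem_univ _)
    refine mul_nonneg (hf_hat γ) ?_
    rw [Complex.mul_conj, ← Complex.ofReal_zero, Complex.real_le_real]
    exact Complex.normSq_nonneg _
  -- Step D: D ≤ card * f 0
  have upper : D ≤ (B.card : ℝ) * f 0 := by
    rw [hD]
    calc ∑ b ∈ B, ∑ b' ∈ B, f (b' - b) ≤ ∑ b ∈ B, f 0 := by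
          refine Finset.sum_le_sum fun b hb => ?_
          rw [← Finset.add_sum_erase _ _ hb, sub_self]
          have : ∑ b' ∈ B.erase b, f (b' - b) ≤ 0 := by
            refine Finset.sum_nonpos fun b' hb' => ?_
            exact hf_nonpos _ (hB b' (Finset.mem_of_mem_erase hb') b hb (Finset.ne_of_mem_erase hb'))
          linarith
      _ = (B.card : ℝ) * f 0 := by rw [Finset.sum_const, nsmul_eq_mul]
  have hcard : (0 : ℝ) < B.card := by exact_mod_cast Finset.card_pos.mpr hBne
  have : (B.card : ℝ) * ((B.card : ℝ) * F) ≤ (B.card : ℝ) * (f 0 * n) := by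
    nlinarith [lower, upper]
  exact le_of_mul_le_mul_left this hcard

open ComplexOrder in
/-- The Delsarte LP bound over a finite abelian group. -/
theorem delsarte_lp_bound {G : Type*} [AddCommGroup G] [Fintype G]
    (A : Set G) (hA : ∀ x, -x ∈ A ↔ x ∈ A) (h0 : (0 : G) ∈ A)
    (B : Finset G) (hB : ∀ b ∈ B, ∀ b' ∈ B, b ≠ b' → b - b' ∉ A)
    (f : G → ℝ)
    (hf_nonpos : ∀ x ∉ A, f x ≤ 0)
    (hf_hat : ∀ γ : AddChar G ℂ, 0 ≤ ∑ x : G, γ x * (f x : ℂ))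
    (hf_sum : 0 < ∑ x : G, f x) :
    (B.card : ℝ) * (∑ x : G, f x) ≤ f 0 * (Fintype.card G : ℝ) := by
  rcases B.eq_empty_or_nonempty with rfl | hBne
  · simp only [Finset.card_empty, Nat.cast_zero, zero_mul]
    have := delsarte_aux A {0} (Finset.singleton_nonempty 0)
      (by simp) f hf_nonpos hf_hat
    simp only [Finset.card_singleton, Nat.cast_one, one_mul] at this
    linarith
  · exact delsarte_aux A B hBne hB f hf_nonpos hf_hat
end

section
/- Let n ≥ 1 and let B ⊆ (ZMod n)^n be a set of exactly n² vectors with the plane code property. Then B can be partitioned into n pairwise disjoint classes, each of size n, such that: whenever b, b' ∈ B are distinct elements of the same class, b - b' has no coordinate equal to 0; and whenever b, b' belong to different classes, b - b' has exactly one coordinate equal to 0. -/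
/-- The number of coordinates where two vectors in `(ZMod n)^n` agree,
i.e. the number of coordinates of `b - b'` equal to `0`. -/
def agreeCount {n : ℕ} (b b' : Fin n → ZMod n) : ℕ :=
  (Finset.univ.filter fun i => b i - b' i = 0).card

/-- `B` has the plane code property: any two distinct elements of `B`
agree in at most one coordinate. -/
def PlaneCode {n : ℕ} (B : Finset (Fin n → ZMod n)) : Prop :=
  ∀ b ∈ B, ∀ b' ∈ B, b ≠ b' → agreeCount b b' ≤ 1


lemma two_le_agreeCount {n : ℕ} {b b' : Fin n → ZMod n} {i j : Fin n} (hij : i ≠ j)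
    (hi : b i = b' i) (hj : b j = b' j) : 2 ≤ agreeCount b b' := by
  have hsub : ({i, j} : Finset (Fin n)) ⊆ Finset.univ.filter fun k => b k - b' k = 0 := by
    intro k hk
    simp only [Finset.mem_insert, Finset.mem_singleton] at hk
    rcases hk with rfl | rfl <;> simp [sub_eq_zero, hi, hj]
  calc 2 = ({i, j} : Finset (Fin n)).card := by
        rw [Finset.card_insert_of_notMem (by simpa using hij), Finset.card_singleton]
    _ ≤ _ := Finset.card_le_card hsub


lemma agreeCount_comm {n : ℕ} (b b' : Fin n → ZMod n) : agreeCount b b' = agreeCount b' b := by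
  unfold agreeCount; congr 1; ext i; simp [sub_eq_zero, eq_comm]

lemma agreeCount_eq_zero_iff {n : ℕ} {b b' : Fin n → ZMod n} :
    agreeCount b b' = 0 ↔ ∀ i, b i ≠ b' i := by
  simp [agreeCount, Finset.card_eq_zero, Finset.filter_eq_empty_iff, sub_eq_zero]

variable {n : ℕ} {B : Finset (Fin n → ZMod n)}


lemma proj_inj (hB : PlaneCode B) {i j : Fin n} (hij : i ≠ j)
    {b b' : Fin n → ZMod n} (hb : b ∈ B) (hb' : b' ∈ B)
    (hi : b i = b' i) (hj : b j = b' j) : b = b' := by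
  by_contra hne
  have h1 := hB b hb b' hb' hne
  have h2 := two_le_agreeCount hij hi hj
  omega

lemma proj_surj (hn : 1 ≤ n) (hcard : B.card = n ^ 2) (hB : PlaneCode B)
    {i j : Fin n} (hij : i ≠ j) (u v : ZMod n) :
    ∃ b ∈ B, b i = u ∧ b j = v := by
  haveI : NeZero n := ⟨by omega⟩
  have hinj : Set.InjOn (fun b : Fin n → ZMod n => (b i, b j)) B := by
    intro b hb b' hb' h
    simp only [Prod.mk.injEq] at h
    exact proj_inj hB hij hb hb' h.1 h.2
  have hcardimg : (B.image fun b => (b i, b j)).card = Fintype.card (ZMod n × ZMod n) := by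
    rw [Finset.card_image_of_injOn hinj, hcard]
    simp [ZMod.card, sq]
  have huniv := Finset.eq_univ_of_card _ hcardimg
  have : (u, v) ∈ B.image fun b => (b i, b j) := huniv ▸ Finset.mem_univ _
  obtain ⟨b, hb, hbe⟩ := Finset.mem_image.mp this
  simp only [Prod.mk.injEq] at hbe
  exact ⟨b, hb, hbe.1, hbe.2⟩

lemma fiber_card (hn2 : 2 ≤ n) (hcard : B.card = n ^ 2) (hB : PlaneCode B)
    (i : Fin n) (v : ZMod n) : (B.filter fun b => b i = v).card = n := by
  haveI : NeZero n := ⟨by omega⟩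
  haveI : Nontrivial (Fin n) := Fin.nontrivial_iff_two_le.mpr hn2
  obtain ⟨j, hj⟩ := exists_ne i
  have hinj : Set.InjOn (fun b : Fin n → ZMod n => b j) (B.filter fun b => b i = v) := by
    intro b hb b' hb' h
    simp only [Finset.coe_filter, Set.mem_setOf_eq] at hb hb'
    exact proj_inj hB hj.symm hb.1 hb'.1 (hb.2.trans hb'.2.symm) h
  have himg : ((B.filter fun b => b i = v).image fun b => b j) = Finset.univ := by
    apply Finset.eq_univ_of_forall
    intro w
    obtain ⟨b, hb, hbi, hbj⟩ := proj_surj (by omega) hcard hB hj.symm v w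
    exact Finset.mem_image.mpr ⟨b, Finset.mem_filter.mpr ⟨hb, hbi⟩, hbj⟩
  have := Finset.card_image_of_injOn hinj
  rw [himg] at this
  simpa [ZMod.card] using this.symm


def clsOf {n : ℕ} (B : Finset (Fin n → ZMod n)) (b : Fin n → ZMod n) :
    Finset (Fin n → ZMod n) :=
  B.filter fun x => x = b ∨ agreeCount b x = 0

lemma cls_card (hn2 : 2 ≤ n) (hcard : B.card = n ^ 2) (hB : PlaneCode B)
    {b : Fin n → ZMod n} (hb : b ∈ B) : (clsOf B b).card = n := by
  have hsplit := Finset.card_filter_add_card_filter_not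
    (s := B) (p := fun x => x = b ∨ agreeCount b x = 0)
  set R := B.filter fun x => ¬(x = b ∨ agreeCount b x = 0) with hR
  have hRbi : R = Finset.univ.biUnion fun i => B.filter fun x => x ≠ b ∧ x i = b i := by
    ext x
    simp only [hR, Finset.mem_filter, Finset.mem_biUnion, Finset.mem_univ, true_and,
      not_or]
    constructor
    · rintro ⟨hxB, hxb, hxa⟩
      have : ∃ i, ¬ b i ≠ x i := by
        by_contra h
        push_neg at h
        exact hxa (agreeCount_eq_zero_iff.mpr fun i => by simpa using h i)
      obtain ⟨i, hi⟩ := this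
      push_neg at hi
      exact ⟨i, hxB, hxb, hi.symm⟩
    · rintro ⟨i, hxB, hxb, hxi⟩
      refine ⟨hxB, hxb, fun h0 => ?_⟩
      exact (agreeCount_eq_zero_iff.mp h0 i) hxi.symm
  have hdisj : ∀ i ∈ (Finset.univ : Finset (Fin n)), ∀ j ∈ Finset.univ, i ≠ j →
      Disjoint (B.filter fun x => x ≠ b ∧ x i = b i)
        (B.filter fun x => x ≠ b ∧ x j = b j) := by
    intro i _ j _ hij
    rw [Finset.disjoint_left]
    intro x hxi hxj
    simp only [Finset.mem_filter] at hxi hxj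
    have h2 := two_le_agreeCount hij hxi.2.2.symm hxj.2.2.symm
    have h1 := hB b hb x hxi.1 (Ne.symm hxi.2.1)
    omega
  have hDcard : ∀ i : Fin n, (B.filter fun x => x ≠ b ∧ x i = b i).card = n - 1 := by
    intro i
    have : (B.filter fun x => x ≠ b ∧ x i = b i)
        = (B.filter fun x => x i = b i).erase b := by
      ext x
      simp only [Finset.mem_filter, Finset.mem_erase]
      tauto
    have hmem : b ∈ B.filter fun x => x i = b i := Finset.mem_filter.mpr ⟨hb, rfl⟩
    rw [this, Finset.card_erase_of_mem hmem, fiber_card hn2 hcard hB i (b i)]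
  have hRcard : R.card = n * (n - 1) := by
    rw [hRbi, Finset.card_biUnion hdisj]
    simp [hDcard, Finset.sum_const, Finset.card_univ]
  have : (clsOf B b).card + n * (n - 1) = n ^ 2 := by
    rw [← hcard, ← hRcard]
    exact hsplit
  obtain ⟨m, rfl⟩ : ∃ m, n = m + 1 := ⟨n - 1, by omega⟩
  have hsq : (m + 1) ^ 2 = (m+1) * (m+1) := sq (m+1)
  simp only [Nat.add_sub_cancel] at this
  rw [hsq] at this
  have hh : (m+1) * (m+1) = (m+1)*m + (m+1) := by ring
  omega

lemma cls_trans (hn2 : 2 ≤ n) (hcard : B.card = n ^ 2) (hB : PlaneCode B)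
    {b a c : Fin n → ZMod n} (hb : b ∈ B) (ha : a ∈ clsOf B b) (hc : c ∈ clsOf B b)
    (hac : a ≠ c) : agreeCount a c = 0 := by
  rw [clsOf, Finset.mem_filter] at ha hc
  obtain ⟨haB, ha'⟩ := ha
  obtain ⟨hcB, hc'⟩ := hc
  rcases ha' with rfl | ha0
  · rcases hc' with rfl | hc0
    · exact absurd rfl hac
    · exact hc0
  rcases hc' with rfl | hc0
  · rw [agreeCount_comm]; exact ha0
  by_contra hne0
  obtain ⟨i, hi⟩ : ∃ i, a i = c i := by
    have hne : (Finset.univ.filter fun i => a i - c i = 0).Nonempty :=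
      Finset.card_ne_zero.mp hne0
    obtain ⟨i, hi⟩ := hne
    simp only [Finset.mem_filter, sub_eq_zero] at hi
    exact ⟨i, hi.2⟩
  have hba : ∀ k, b k ≠ a k := agreeCount_eq_zero_iff.mp ha0
  have hbc : ∀ k, b k ≠ c k := agreeCount_eq_zero_iff.mp hc0
  set v := a i with hv
  have hex : ∀ j : Fin n, ∃ y ∈ B, y i = v ∧ (j ≠ i → y j = b j) := by
    intro j
    by_cases h : j = i
    · exact ⟨a, haB, rfl, fun hne => absurd h hne⟩
    · obtain ⟨y, hyB, hyi, hyj⟩ := proj_surj (by omega) hcard hB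
        (fun he => h he.symm) v (b j)
      exact ⟨y, hyB, hyi, fun _ => hyj⟩
  choose y hyB hyi hyj using hex
  -- refine y so that y i = a
  set f : Fin n → (Fin n → ZMod n) := fun j => if j = i then a else y j with hf
  have hfB : ∀ j, f j ∈ B := by
    intro j; simp only [hf]; split
    · exact haB
    · exact hyB j
  have hfi : ∀ j, f j i = v := by
    intro j; simp only [hf]; split
    · rfl
    · exact hyi j
  have hfj : ∀ j, j ≠ i → f j j = b j := by
    intro j hj; simp only [hf, if_neg hj]; exact hyj j hj
  have hfinj : Function.Injective f := by
    intro j j' hjj'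
    by_contra hne
    by_cases h1 : j = i
    · have h2 : j' ≠ i := fun h => hne (h1.trans h.symm)
      have e : f j = a := by rw [hf]; simp [h1]
      have key : a j' = b j' := by
        calc a j' = f j j' := by rw [e]
          _ = f j' j' := by rw [hjj']
          _ = b j' := hfj j' h2
      exact hba j' key.symm
    · by_cases h2 : j' = i
      · have e : f j' = a := by rw [hf]; simp [h2]
        have key : a j = b j := by
          calc a j = f j' j := by rw [e]
            _ = f j j := by rw [hjj']
            _ = b j := hfj j h1
        exact hba j key.symm
      · -- both ≠ i : f j agrees with b at j and j'
        have e1 : b j = f j j := (hfj j h1).symm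
        have e2 : b j' = f j j' := by rw [hjj']; exact (hfj j' h2).symm
        have hfb : f j ≠ b := by
          intro h
          have := hfi j
          rw [h] at this
          exact hba i this
        have h2le := two_le_agreeCount hne e1 e2
        have h1le := hB b hb (f j) (hfB j) (Ne.symm hfb)
        omega
  have hsub : insert c (Finset.univ.image f) ⊆ B.filter fun x => x i = v := by
    intro x hx
    rcases Finset.mem_insert.mp hx with rfl | hx
    · exact Finset.mem_filter.mpr ⟨hcB, hi.symm⟩
    · obtain ⟨j, _, rfl⟩ := Finset.mem_image.mp hx
      exact Finset.mem_filter.mpr ⟨hfB j, hfi j⟩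
  have hcnot : c ∉ Finset.univ.image f := by
    intro h
    obtain ⟨j, _, hj⟩ := Finset.mem_image.mp h
    by_cases h1 : j = i
    · subst h1
      simp only [hf, if_pos rfl] at hj
      exact hac hj
    · have := hfj j h1
      rw [hj] at this
      exact hbc j this.symm
  have hcard1 : (insert c (Finset.univ.image f)).card = n + 1 := by
    rw [Finset.card_insert_of_notMem hcnot,
      Finset.card_image_of_injective _ hfinj, Finset.card_univ, Fintype.card_fin]
  have := Finset.card_le_card hsub
  rw [hcard1, fiber_card hn2 hcard hB i v] at this
  omega


lemma cls_subset (b : Fin n → ZMod n) : clsOf B b ⊆ B := Finset.filter_subset _ _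

lemma mem_cls_self {b : Fin n → ZMod n} (hb : b ∈ B) : b ∈ clsOf B b :=
  Finset.mem_filter.mpr ⟨hb, Or.inl rfl⟩

lemma cls_symm {b b' : Fin n → ZMod n} (hb : b ∈ B) (hb' : b' ∈ clsOf B b) :
    b ∈ clsOf B b' := by
  rw [clsOf, Finset.mem_filter] at hb' ⊢
  rcases hb'.2 with rfl | h0
  · exact ⟨hb, Or.inl rfl⟩
  · exact ⟨hb, Or.inr (agreeCount_comm b b' ▸ h0)⟩

lemma cls_eq (hn2 : 2 ≤ n) (hcard : B.card = n ^ 2) (hB : PlaneCode B)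
    {b b' : Fin n → ZMod n} (hb : b ∈ B) (hb' : b' ∈ clsOf B b) :
    clsOf B b' = clsOf B b := by
  have hb'B : b' ∈ B := cls_subset b hb'
  ext x
  constructor
  · intro hx
    have hxB : x ∈ B := cls_subset b' hx
    by_cases hxb : x = b
    · exact Finset.mem_filter.mpr ⟨hxB, Or.inl hxb⟩
    · have h0 := cls_trans hn2 hcard hB hb'B (cls_symm hb hb') hx (fun h => hxb h.symm)
      exact Finset.mem_filter.mpr ⟨hxB, Or.inr h0⟩
  · intro hx
    have hxB : x ∈ B := cls_subset b hx
    by_cases hxb : x = b'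
    · exact Finset.mem_filter.mpr ⟨hxB, Or.inl hxb⟩
    · have h0 := cls_trans hn2 hcard hB hb hb' hx (fun h => hxb h.symm)
      exact Finset.mem_filter.mpr ⟨hxB, Or.inr h0⟩

theorem plane_code_partition (n : ℕ) (hn : 1 ≤ n)
    (B : Finset (Fin n → ZMod n)) (hcard : B.card = n ^ 2) (hB : PlaneCode B) :
    ∃ C : Fin n → Finset (Fin n → ZMod n),
      (∀ k, (C k).card = n) ∧
      (∀ k l, k ≠ l → Disjoint (C k) (C l)) ∧
      (Finset.univ.biUnion C = B) ∧
      (∀ k, ∀ b ∈ C k, ∀ b' ∈ C k, b ≠ b' → agreeCount b b' = 0) ∧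
      (∀ k l, k ≠ l → ∀ b ∈ C k, ∀ b' ∈ C l, agreeCount b b' = 1) := by
  by_cases hn1 : n = 1
  · subst hn1
    refine ⟨fun _ => B, fun _ => by simpa using hcard, ?_, ?_, ?_, ?_⟩
    · intro k l hkl; exact absurd (Subsingleton.elim k l) hkl
    · ext x; simp
    · intro k b hb b' hb' hne
      have h1 : B.card ≤ 1 := by omega
      exact absurd (Finset.card_le_one.mp h1 b hb b' hb') hne
    · intro k l hkl; exact absurd (Subsingleton.elim k l) hkl
  have hn2 : 2 ≤ n := by omega
  -- the set of classes
  set S : Finset (Finset (Fin n → ZMod n)) := B.image (clsOf B) with hS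
  have hmemS : ∀ s ∈ S, ∃ b ∈ B, clsOf B b = s := fun s hs => by
    simpa [hS] using Finset.mem_image.mp hs
  have hScls : ∀ s ∈ S, ∀ x ∈ s, x ∈ B ∧ clsOf B x = s := by
    intro s hs x hx
    obtain ⟨b, hb, rfl⟩ := hmemS s hs
    exact ⟨cls_subset b hx, cls_eq hn2 hcard hB hb hx⟩
  have hSdisj : ∀ s ∈ S, ∀ t ∈ S, s ≠ t → Disjoint s t := by
    intro s hs t ht hst
    rw [Finset.disjoint_left]
    intro x hxs hxt
    have h1 := (hScls s hs x hxs).2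
    have h2 := (hScls t ht x hxt).2
    exact hst (h1 ▸ h2 ▸ rfl)
  have hSunion : S.biUnion id = B := by
    ext x
    simp only [Finset.mem_biUnion, id]
    constructor
    · rintro ⟨s, hs, hxs⟩; exact (hScls s hs x hxs).1
    · intro hx
      exact ⟨clsOf B x, Finset.mem_image_of_mem _ hx, mem_cls_self hx⟩
  have hScard : S.card = n := by
    have h1 : (S.biUnion id).card = ∑ s ∈ S, s.card := Finset.card_biUnion hSdisj
    have h2 : ∑ s ∈ S, s.card = S.card * n := by
      rw [Finset.sum_congr rfl fun s hs => ?_]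
      · rw [Finset.sum_const, smul_eq_mul]
      · obtain ⟨b, hb, rfl⟩ := hmemS s hs
        exact cls_card hn2 hcard hB hb
    rw [hSunion, hcard, h2] at h1
    have := Nat.eq_of_mul_eq_mul_right (show 0 < n by omega) (h1.symm.trans (sq n))
    omega
  -- index the classes by Fin n
  set e := S.equivFin with he
  set C : Fin n → Finset (Fin n → ZMod n) :=
    fun k => (e.symm (Fin.cast hScard.symm k)).val with hC
  have hCS : ∀ k, C k ∈ S := fun k => (e.symm _).2
  have hCinj : ∀ k l : Fin n, C k = C l → k = l := by
    intro k l h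
    have h2 := e.symm.injective (Subtype.ext h)
    simpa [Fin.ext_iff] using congrArg Fin.val h2
  have hCsurj : ∀ s ∈ S, ∃ k, C k = s := by
    intro s hs
    refine ⟨Fin.cast hScard (e ⟨s, hs⟩), ?_⟩
    simp only [hC]
    have h3 : (Fin.cast hScard.symm (Fin.cast hScard (e ⟨s, hs⟩))) = e ⟨s, hs⟩ := by
      simp [Fin.ext_iff]
    rw [h3, Equiv.symm_apply_apply]
  refine ⟨C, ?_, ?_, ?_, ?_, ?_⟩
  · intro k
    obtain ⟨b, hb, hbs⟩ := hmemS _ (hCS k)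
    rw [← hbs]
    exact cls_card hn2 hcard hB hb
  · intro k l hkl
    exact hSdisj _ (hCS k) _ (hCS l) (fun h => hkl (hCinj k l h))
  · ext x
    simp only [Finset.mem_biUnion, Finset.mem_univ, true_and]
    constructor
    · rintro ⟨k, hk⟩
      exact (hScls _ (hCS k) x hk).1
    · intro hx
      have hxS : clsOf B x ∈ S := Finset.mem_image_of_mem _ hx
      obtain ⟨k, hk⟩ := hCsurj _ hxS
      exact ⟨k, hk ▸ mem_cls_self hx⟩
  · intro k b hb b' hb' hne
    obtain ⟨x, hx, hxs⟩ := hmemS _ (hCS k)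
    rw [← hxs] at hb hb'
    exact cls_trans hn2 hcard hB hx hb hb' hne
  · intro k l hkl b hb b' hb'
    have hbB := (hScls _ (hCS k) b hb).1
    have hb'B := (hScls _ (hCS l) b' hb').1
    have hcls_b := (hScls _ (hCS k) b hb).2
    have hcls_b' := (hScls _ (hCS l) b' hb').2
    have hne : b ≠ b' := by
      rintro rfl
      exact hkl (hCinj k l (hcls_b.symm.trans hcls_b'))
    have h0 : agreeCount b b' ≠ 0 := by
      intro h0
      have hb'in : b' ∈ clsOf B b := Finset.mem_filter.mpr ⟨hb'B, Or.inr h0⟩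
      have := cls_eq hn2 hcard hB hbB hb'in
      exact hkl (hCinj k l (hcls_b.symm.trans (this.symm.trans hcls_b')))
    have h1 := hB b hbB b' hb'B hne
    omega
end

section
/- Let n ≥ 1 and let B ⊆ (ZMod n)^n be a set of exactly n² vectors with the plane code property. If v, w, u ∈ B are three distinct vectors such that v - w has no coordinate equal to 0 and w - u has no coordinate equal to 0, then v - u has no coordinate equal to 0. -/
theorem plane_code_parallel_trans (n : ℕ) (hn : 1 ≤ n)
    (B : Finset (Fin n → ZMod n)) (hcard : B.card = n ^ 2) (hB : PlaneCode B)
    (v w u : Fin n → ZMod n) (hv : v ∈ B) (hw : w ∈ B) (hu : u ∈ B)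
    (hvw : v ≠ w) (hwu : w ≠ u) (hvu : v ≠ u)
    (h1 : agreeCount v w = 0) (h2 : agreeCount w u = 0) :
    agreeCount v u = 0 := by
  by_contra h0
  -- n ≥ 2
  have hn2 : 2 ≤ n := by
    rcases Nat.lt_or_ge n 2 with h | h
    · have : n = 1 := by omega
      subst this
      exact absurd (Subsingleton.elim v w) hvw
    · exact h
  haveI : NeZero n := ⟨by omega⟩
  -- two agreements force equality
  have hAgree : ∀ b ∈ B, ∀ b' ∈ B, ∀ i j : Fin n, i ≠ j →
      b i = b' i → b j = b' j → b = b' := by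
    intro b hb b' hb' i j hij hi hj
    by_contra hne
    have hle := hB b hb b' hb' hne
    have h2' : 1 < agreeCount b b' := by
      apply Finset.one_lt_card.2
      refine ⟨i, ?_, j, ?_, hij⟩ <;> simp [sub_eq_zero, hi, hj]
    omega
  -- surjectivity of the projection onto two distinct coordinates
  have hsurj : ∀ (i j : Fin n), i ≠ j → ∀ x y : ZMod n,
      ∃ b, b ∈ B ∧ b i = x ∧ b j = y := by
    intro i j hij x y
    have hinj : Set.InjOn (fun b : Fin n → ZMod n => (b i, b j)) B := by
      intro b hb b' hb' h
      simp only [Prod.mk.injEq] at h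
      exact hAgree b hb b' hb' i j hij h.1 h.2
    have himg : (B.image fun b => (b i, b j)) = Finset.univ := by
      apply Finset.eq_univ_of_card
      rw [Finset.card_image_of_injOn hinj, hcard]
      simp [Finset.card_univ, ZMod.card, sq]
    have hmem : (x, y) ∈ B.image fun b => (b i, b j) := by
      rw [himg]; exact Finset.mem_univ _
    obtain ⟨b, hb, hbeq⟩ := Finset.mem_image.1 hmem
    exact ⟨b, hb, by simpa using congrArg Prod.fst hbeq,
      by simpa using congrArg Prod.snd hbeq⟩
  -- v and w disagree everywhere, w and u disagree everywhere
  have hvwj : ∀ j, v j ≠ w j := by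
    intro j hj
    have : (Finset.univ.filter fun i => v i - w i = 0) = ∅ :=
      Finset.card_eq_zero.mp h1
    have := Finset.eq_empty_iff_forall_notMem.mp this j
    simp [sub_eq_zero, hj] at this
  have hwuj : ∀ j, w j ≠ u j := by
    intro j hj
    have : (Finset.univ.filter fun i => w i - u i = 0) = ∅ :=
      Finset.card_eq_zero.mp h2
    have := Finset.eq_empty_iff_forall_notMem.mp this j
    simp [sub_eq_zero, hj] at this
  -- pick the coordinate where v and u agree
  have : (Finset.univ.filter fun i => v i - u i = 0).Nonempty :=
    Finset.card_ne_zero.mp h0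
  obtain ⟨i, hi⟩ := this
  have hvu_i : v i = u i := by
    have := (Finset.mem_filter.mp hi).2
    exact sub_eq_zero.mp this
  set a := v i with ha
  set L := B.filter (fun b => b i = a) with hL
  have hvL : v ∈ L := Finset.mem_filter.mpr ⟨hv, rfl⟩
  have huL : u ∈ L := Finset.mem_filter.mpr ⟨hu, hvu_i.symm⟩
  -- some coordinate ≠ i
  obtain ⟨j0, hj0⟩ : ∃ j0 : Fin n, j0 ≠ i := by
    have : 1 < Fintype.card (Fin n) := by simp; omega
    exact Fintype.exists_ne_of_one_lt_card this i
  -- L has at most n elements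
  have hLcard : L.card ≤ n := by
    have hinj : Set.InjOn (fun b : Fin n → ZMod n => b j0) L := by
      intro b hb b' hb' h
      obtain ⟨hbB, hbi⟩ := Finset.mem_filter.mp hb
      obtain ⟨hbB', hbi'⟩ := Finset.mem_filter.mp hb'
      exact hAgree b hbB b' hbB' i j0 (Ne.symm hj0) (hbi.trans hbi'.symm) h
    calc L.card = (L.image fun b => b j0).card :=
          (Finset.card_image_of_injOn hinj).symm
      _ ≤ Fintype.card (ZMod n) := Finset.card_le_univ _
      _ = n := ZMod.card n
  -- the injection from coordinates ≠ i into L \ {v, u}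
  have hex : ∀ j : Fin n, j ≠ i → ∃ b, b ∈ B ∧ b i = a ∧ b j = w j := by
    intro j hj
    exact hsurj i j (Ne.symm hj) a (w j)
  classical
  set f : Fin n → (Fin n → ZMod n) := fun j =>
    if h : j ≠ i then (hex j h).choose else v with hf
  have hfspec : ∀ j (h : j ≠ i),
      f j ∈ B ∧ f j i = a ∧ f j j = w j := by
    intro j h
    simp only [hf, dif_pos h]
    exact (hex j h).choose_spec
  have hmaps : ∀ j ∈ Finset.univ.erase i, f j ∈ (L.erase v).erase u := by
    intro j hj
    have hjne : j ≠ i := (Finset.mem_erase.mp hj).1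
    obtain ⟨hfB, hfi, hfj⟩ := hfspec j hjne
    refine Finset.mem_erase.mpr ⟨?_, Finset.mem_erase.mpr ⟨?_,
      Finset.mem_filter.mpr ⟨hfB, hfi⟩⟩⟩
    · intro h; exact hwuj j (by rw [← hfj, h])
    · intro h; exact hvwj j (by rw [← hfj, h])
  have hinjf : Set.InjOn f (Finset.univ.erase i) := by
    intro j hj j' hj' h
    have hjne : j ≠ i := (Finset.mem_erase.mp (Finset.mem_coe.mp hj)).1
    have hjne' : j' ≠ i := (Finset.mem_erase.mp (Finset.mem_coe.mp hj')).1
    by_contra hne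
    obtain ⟨hfB, hfi, hfj⟩ := hfspec j hjne
    obtain ⟨hfB', hfi', hfj'⟩ := hfspec j' hjne'
    have hbw : f j = w := by
      apply hAgree (f j) hfB w hw j j' hne hfj
      rw [h]; exact hfj'
    exact hvwj i (by rw [ha] at hfi; rw [← hfi, hbw])
  have hcardle : (Finset.univ.erase i : Finset (Fin n)).card ≤
      ((L.erase v).erase u).card :=
    Finset.card_le_card_of_injOn f hmaps hinjf
  have h1' : (Finset.univ.erase i : Finset (Fin n)).card = n - 1 := by
    rw [Finset.card_erase_of_mem (Finset.mem_univ i)]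
    simp
  have h2' : ((L.erase v).erase u).card ≤ n - 2 := by
    have huL' : u ∈ L.erase v := Finset.mem_erase.mpr ⟨Ne.symm hvu, huL⟩
    rw [Finset.card_erase_of_mem huL', Finset.card_erase_of_mem hvL]
    omega
  omega
end

section
/- Let n ≥ 2 and let B ⊆ (ZMod n)^n be a set of exactly n² vectors with the plane code property. Then for every index j ∈ Fin n and every value z ∈ ZMod n, exactly n vectors b ∈ B satisfy b_j = z. -/
theorem plane_code_coordinate_count (n : ℕ) (hn : 2 ≤ n)
    (B : Finset (Fin n → ZMod n)) (hcard : B.card = n ^ 2) (hB : PlaneCode B)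
    (j : Fin n) (z : ZMod n) :
    (B.filter fun b => b j = z).card = n := by
  haveI : NeZero n := ⟨by omega⟩
  haveI : Nontrivial (Fin n) := Fin.nontrivial_iff_two_le.mpr hn
  obtain ⟨k, hk⟩ := exists_ne j
  -- upper bound for every fiber
  have hub : ∀ w : ZMod n, (B.filter fun b => b j = w).card ≤ n := by
    intro w
    have : (B.filter fun b => b j = w).card ≤ (Finset.univ : Finset (ZMod n)).card := by
      apply Finset.card_le_card_of_injOn (fun b => b k) (fun _ _ => Finset.mem_univ _)
      intro b hb b' hb' hbk
      simp only [Finset.coe_filter, Set.mem_setOf_eq, Finset.mem_coe] at hb hb'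
      by_contra hne
      have h2 : 2 ≤ agreeCount b b' := by
        have : ({j, k} : Finset (Fin n)) ⊆ Finset.univ.filter fun i => b i - b' i = 0 := by
          intro i hi
          simp only [Finset.mem_insert, Finset.mem_singleton] at hi
          rcases hi with rfl | rfl <;> simp [hb.2, hb'.2, hbk, sub_eq_zero]
        calc 2 = ({j, k} : Finset (Fin n)).card := by
                rw [Finset.card_insert_of_notMem (by simpa using hk.symm),
                  Finset.card_singleton]
          _ ≤ _ := Finset.card_le_card this
      have := hB b hb.1 b' hb'.1 hne
      omega
    simpa [ZMod.card] using this
  -- sum of fibers is n^2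
  have hsum : ∑ w : ZMod n, (B.filter fun b => b j = w).card = n ^ 2 := by
    rw [← hcard]
    exact (Finset.card_eq_sum_card_fiberwise (fun b _ => Finset.mem_univ (b j))).symm
  by_contra hne
  have hlt : (B.filter fun b => b j = z).card < n := lt_of_le_of_ne (hub z) hne
  have h2 : n ^ 2 < n * n := by
    calc n ^ 2 = ∑ w : ZMod n, (B.filter fun b => b j = w).card := hsum.symm
      _ < ∑ _w : ZMod n, n := Finset.sum_lt_sum (fun w _ => hub w) ⟨z, Finset.mem_univ z, hlt⟩
      _ = n * n := by simp [Finset.sum_const, ZMod.card, mul_comm]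
  rw [sq] at h2
  exact lt_irrefl _ h2
end

section
/- Let n ≥ 1 and let B ⊆ (ZMod n)^n be a set of exactly n² vectors with the plane code property. Let ζ = exp(2πi/n) ∈ ℂ. Then for every pair of distinct indices i, j ∈ Fin n and all exponents k, m ∈ ZMod n with (k, m) ≠ (0, 0), we have Σ_{b ∈ B} ζ^{k·b_i + m·b_j} = 0 (where the exponent k·b_i + m·b_j ∈ ZMod n determines a well-defined power of the n-th root of unity ζ). -/
theorem plane_code_character_sum_two (n : ℕ) (hn : 1 ≤ n)
    (B : Finset (Fin n → ZMod n)) (hcard : B.card = n ^ 2) (hB : PlaneCode B)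
    (ζ : ℂ) (hζ : ζ = Complex.exp (2 * Real.pi * Complex.I / n))
    (i j : Fin n) (hij : i ≠ j) (k m : ZMod n) (hkm : (k, m) ≠ (0, 0)) :
    ∑ b ∈ B, ζ ^ (k * b i + m * b j).val = 0 := by
  haveI : NeZero n := ⟨by omega⟩
  have hprim : IsPrimitiveRoot ζ n := by
    rw [hζ]; exact Complex.isPrimitiveRoot_exp n (by omega)
  have hζn : ζ ^ n = 1 := hprim.pow_eq_one
  have hmod : ∀ t : ℕ, ζ ^ (t % n) = ζ ^ t := fun t => by
    conv_rhs => rw [← Nat.div_add_mod t n]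
    rw [pow_add, pow_mul, hζn, one_pow, one_mul]
  have hval : ∀ a b : ZMod n, ζ ^ (a + b).val = ζ ^ a.val * ζ ^ b.val := fun a b => by
    rw [ZMod.val_add, hmod, pow_add]
  have hsum : ∀ c : ZMod n, c ≠ 0 → ∑ x : ZMod n, ζ ^ (c * x).val = 0 := by
    intro c hc
    have h1 : ∀ x : ZMod n, ζ ^ (c * x).val = (ζ ^ c.val) ^ x.val := fun x => by
      rw [ZMod.val_mul, hmod, pow_mul]
    simp_rw [h1]
    have hne : ζ ^ c.val ≠ 1 := by
      intro h
      have hd := (hprim.pow_eq_one_iff_dvd c.val).mp h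
      have hv : c.val < n := ZMod.val_lt c
      exact hc ((ZMod.val_eq_zero c).mp (Nat.eq_zero_of_dvd_of_lt hd hv))
    have hbij : ∑ x : ZMod n, (ζ ^ c.val) ^ x.val = ∑ t ∈ Finset.range n, (ζ ^ c.val) ^ t := by
      refine Finset.sum_nbij' (i := fun x : ZMod n => x.val) (j := fun t : ℕ => (t : ZMod n))
        ?_ ?_ ?_ ?_ ?_
      · intro a _; exact Finset.mem_range.mpr (ZMod.val_lt a)
      · intro a _; exact Finset.mem_univ _
      · intro a _; simp [ZMod.natCast_val]
      · intro t ht; exact ZMod.val_natCast_of_lt (Finset.mem_range.mp ht)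
      · intro a _; rfl
    rw [hbij, geom_sum_eq hne, ← pow_mul, mul_comm, pow_mul, hζn, one_pow, sub_self,
      zero_div]
  set f : (Fin n → ZMod n) → ZMod n × ZMod n := fun b => (b i, b j) with hf
  have hinj : ∀ b ∈ B, ∀ b' ∈ B, f b = f b' → b = b' := by
    intro b hb b' hb' hfe
    by_contra hne
    have h2 := hB b hb b' hb' hne
    have hsub : ({i, j} : Finset (Fin n)) ⊆ Finset.univ.filter fun l => b l - b' l = 0 := by
      intro l hl
      simp only [Finset.mem_insert, Finset.mem_singleton] at hl
      simp only [Finset.mem_filter, Finset.mem_univ, true_and]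
      rcases hl with rfl | rfl
      · have h := congrArg Prod.fst hfe; simp only [hf] at h; rw [h, sub_self]
      · have h := congrArg Prod.snd hfe; simp only [hf] at h; rw [h, sub_self]
    have hc : 2 ≤ agreeCount b b' := by
      have hcard2 := Finset.card_le_card hsub
      rwa [Finset.card_insert_of_notMem (by simpa using hij), Finset.card_singleton]
        at hcard2
    unfold agreeCount at h2 hc
    omega
  have himg : B.image f = Finset.univ := by
    apply Finset.eq_univ_of_card
    rw [Finset.card_image_of_injOn (fun x hx y hy => hinj x hx y hy), hcard]
    simp [Fintype.card_prod, ZMod.card, sq]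
  have hrw : ∑ b ∈ B, ζ ^ (k * b i + m * b j).val
      = ∑ p : ZMod n × ZMod n, ζ ^ (k * p.1 + m * p.2).val := by
    rw [← himg, Finset.sum_image hinj]
  rw [hrw, Fintype.sum_prod_type]
  simp_rw [hval, ← Finset.mul_sum, ← Finset.sum_mul]
  rcases eq_or_ne k 0 with rfl | hk
  · have hm : m ≠ 0 := fun h => hkm (by rw [h])
    rw [hsum m hm, mul_zero]
  · rw [hsum k hk, zero_mul]
end

section
/- Let n ≥ 1 and let B ⊆ (ZMod n)^n be a set of exactly n² vectors with the plane code property. Let ζ = exp(2πi/n) ∈ ℂ. Then for every index j ∈ Fin n and every exponent m ∈ ZMod n with m ≠ 0, we have Σ_{b ∈ B} ζ^{m·b_j} = 0 (where the exponent m·b_j ∈ ZMod n determines a well-defined power of the n-th root of unity ζ). -/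
lemma pow_val_aux {n : ℕ} {ζ : ℂ} (hζn : ζ ^ n = 1) (x : ℕ) :
    ζ ^ (x % n) = ζ ^ x := by
  conv_rhs => rw [← Nat.div_add_mod x n]
  rw [pow_add, pow_mul, hζn, one_pow, one_mul]

lemma char_sum_zero (n : ℕ) [NeZero n] (hn : 1 ≤ n) (ζ : ℂ)
    (hζ : ζ = Complex.exp (2 * Real.pi * Complex.I / n))
    (m : ZMod n) (hm : m ≠ 0) :
    ∑ c : ZMod n, ζ ^ (m * c).val = 0 := by
  have hn0 : (n : ℕ) ≠ 0 := by omega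
  have hprim : IsPrimitiveRoot ζ n := hζ ▸ Complex.isPrimitiveRoot_exp n hn0
  have hζn : ζ ^ n = 1 := hprim.pow_eq_one
  set w : ℂ := ζ ^ m.val with hw
  have hterm : ∀ c : ZMod n, ζ ^ (m * c).val = w ^ c.val := by
    intro c
    rw [ZMod.val_mul, pow_val_aux hζn, hw, ← pow_mul]
  have hsum : ∑ c : ZMod n, ζ ^ (m * c).val = ∑ k ∈ Finset.range n, w ^ k := by
    rw [Finset.sum_congr rfl fun c _ => hterm c]
    exact Finset.sum_nbij' (fun c => c.val) (fun k => (k : ZMod n))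
      (fun c _ => Finset.mem_range.mpr (ZMod.val_lt c))
      (fun k _ => Finset.mem_univ _)
      (fun c _ => by simp [ZMod.natCast_val, ZMod.cast_id])
      (fun k hk => ZMod.val_natCast_of_lt (Finset.mem_range.mp hk))
      (fun c _ => rfl)
  have hw1 : w ≠ 1 := by
    intro h
    have hdvd := (hprim.pow_eq_one_iff_dvd m.val).mp h
    have hlt : m.val < n := ZMod.val_lt m
    have hne : m.val ≠ 0 := by simpa [ZMod.val_eq_zero] using hm
    have := Nat.le_of_dvd (Nat.pos_of_ne_zero hne) hdvd
    omega
  have hwn : w ^ n = 1 := by rw [hw, ← pow_mul, mul_comm, pow_mul, hζn, one_pow]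
  rw [hsum, geom_sum_eq hw1, hwn, sub_self, zero_div]

theorem plane_code_character_sum_one (n : ℕ) (hn : 1 ≤ n)
    (B : Finset (Fin n → ZMod n)) (hcard : B.card = n ^ 2) (hB : PlaneCode B)
    (ζ : ℂ) (hζ : ζ = Complex.exp (2 * Real.pi * Complex.I / n))
    (j : Fin n) (m : ZMod n) (hm : m ≠ 0) :
    ∑ b ∈ B, ζ ^ (m * b j).val = 0 := by
  haveI : NeZero n := ⟨by omega⟩
  rcases eq_or_lt_of_le hn with h1 | h2
  · exfalso; apply hm
    haveI : Subsingleton (ZMod n) := by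
      rw [← h1]; exact inferInstanceAs (Subsingleton (ZMod 1))
    exact Subsingleton.elim m 0
  -- n ≥ 2 : pick i ≠ j
  obtain ⟨i, hij⟩ : ∃ i : Fin n, i ≠ j := by
    have : 1 < Fintype.card (Fin n) := by simpa using h2
    exact Fintype.exists_ne_of_one_lt_card this j
  set F : (Fin n → ZMod n) → ZMod n × ZMod n := fun b => (b i, b j) with hF
  have hinj : ∀ b ∈ B, ∀ b' ∈ B, F b = F b' → b = b' := by
    intro b hb b' hb' heq
    by_contra hne
    have h2le : 2 ≤ agreeCount b b' := by
      have hsub : ({i, j} : Finset (Fin n)) ⊆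
          Finset.univ.filter fun k => b k - b' k = 0 := by
        intro k hk
        simp only [Finset.mem_insert, Finset.mem_singleton] at hk
        rcases hk with rfl | rfl <;>
          simp [Prod.ext_iff, hF] at heq <;>
          simp [Finset.mem_filter, heq.1, heq.2, sub_eq_zero]
      calc 2 = ({i, j} : Finset (Fin n)).card := by
              rw [Finset.card_insert_of_notMem (by simpa using hij),
                Finset.card_singleton]
        _ ≤ _ := Finset.card_le_card hsub
    exact absurd (hB b hb b' hb' hne) (by omega)
  have himg : B.image F = Finset.univ := by
    apply Finset.eq_univ_of_card
    rw [Finset.card_image_of_injOn fun b hb b' hb' => hinj b hb b' hb']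
    simp [hcard, ZMod.card, sq]
  have : ∑ b ∈ B, ζ ^ (m * b j).val = ∑ p ∈ B.image F, ζ ^ (m * p.2).val := by
    rw [Finset.sum_image hinj]
  rw [this, himg, Fintype.sum_prod_type]
  rw [Finset.sum_comm]
  have : ∀ c : ZMod n, ∑ _a : ZMod n, ζ ^ (m * c).val = n * ζ ^ (m * c).val := by
    intro c; simp [ZMod.card]
  calc ∑ c : ZMod n, ∑ _a : ZMod n, ζ ^ (m * c).val
      = ∑ c : ZMod n, (n : ℂ) * ζ ^ (m * c).val := Finset.sum_congr rfl fun c _ => this c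
    _ = n * ∑ c : ZMod n, ζ ^ (m * c).val := by rw [Finset.mul_sum]
    _ = 0 := by rw [char_sum_zero n hn ζ hζ m hm, mul_zero]
end

section
/- Let n ≥ 1, let ζ = exp(2πi/n) ∈ ℂ, and let B₀ ⊆ (ZMod n)^n be a finite set of vectors. Let D be the set of all d ∈ (ZMod n)^n such that for every v ∈ B₀ the difference d - v has at most one coordinate equal to 0. Suppose there exists a function h : (ZMod n)^n → ℂ which is a finite linear combination (with complex coefficients) of functions of the form z ↦ ζ^{k·z_i + m·z_j} with i, j ∈ Fin n, k, m ∈ ZMod n, (k, m) ≠ (0, 0), together with functions of the form z ↦ ζ^{m·z_j} with j ∈ Fin n, m ∈ ZMod n, m ≠ 0, and such that Σ_{v ∈ B₀} h(v) = 1 and for every d ∈ D the value h(d) is a nonnegative real number. Then there is no set B ⊆ (ZMod n)^n with B₀ ⊆ B, |B| = n², and the plane code property. -/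
open ComplexOrder in
theorem plane_code_witness_obstruction (n : ℕ) (hn : 1 ≤ n)
    (ζ : ℂ) (hζ : ζ = Complex.exp (2 * Real.pi * Complex.I / n))
    (B₀ : Finset (Fin n → ZMod n))
    (D : Set (Fin n → ZMod n))
    (hD : D = {d | ∀ v ∈ B₀, agreeCount d v ≤ 1})
    (h : (Fin n → ZMod n) → ℂ)
    (hspan : h ∈ Submodule.span ℂ (
        {f : (Fin n → ZMod n) → ℂ | ∃ i j : Fin n, ∃ k m : ZMod n,
            i ≠ j ∧ (k, m) ≠ (0, 0) ∧ f = fun z => ζ ^ (k * z i + m * z j).val} ∪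
        {f : (Fin n → ZMod n) → ℂ | ∃ j : Fin n, ∃ m : ZMod n,
            m ≠ 0 ∧ f = fun z => ζ ^ (m * z j).val}))
    (hsum : ∑ v ∈ B₀, h v = 1)
    (hpos : ∀ d ∈ D, 0 ≤ h d) :
    ¬ ∃ B : Finset (Fin n → ZMod n), B₀ ⊆ B ∧ B.card = n ^ 2 ∧ PlaneCode B := by
  rintro ⟨B, hB₀B, hcard, hpc⟩
  haveI : NeZero n := ⟨by omega⟩
  have hn0 : (n : ℕ) ≠ 0 := by omega
  have hprim : IsPrimitiveRoot ζ n := hζ ▸ Complex.isPrimitiveRoot_exp n hn0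
  have hζn : ζ ^ n = 1 := hprim.pow_eq_one
  -- reduce exponents mod n
  have hpowcast : ∀ e : ℕ, ζ ^ ((e : ZMod n)).val = ζ ^ e := by
    intro e
    conv_rhs => rw [← Nat.div_add_mod e n]
    rw [pow_add, pow_mul, hζn, one_pow, one_mul, ZMod.val_natCast]
  -- one-variable character sum vanishes
  have key1 : ∀ k : ZMod n, k ≠ 0 → ∑ x : ZMod n, ζ ^ (k * x).val = 0 := by
    intro k hk
    have h1 : ∀ x : ZMod n, ζ ^ (k * x).val = (ζ ^ k.val) ^ x.val := by
      intro x
      have : k * x = ((k.val * x.val : ℕ) : ZMod n) := by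
        push_cast [ZMod.natCast_rightInverse k, ZMod.natCast_rightInverse x]
        ring
      rw [this, hpowcast, pow_mul]
    simp_rw [h1]
    have hsumrange : ∑ x : ZMod n, (ζ ^ k.val) ^ x.val
        = ∑ t ∈ Finset.range n, (ζ ^ k.val) ^ t := by
      refine Finset.sum_nbij' (fun x => x.val) (fun t => (t : ZMod n)) ?_ ?_ ?_ ?_ ?_
      · intro x _; exact Finset.mem_range.mpr (ZMod.val_lt x)
      · intro t _; exact Finset.mem_univ _
      · intro x _; exact ZMod.natCast_rightInverse x
      · intro t ht; exact ZMod.val_cast_of_lt (Finset.mem_range.mp ht)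
      · intro x _; rfl
    rw [hsumrange]
    have hne1 : ζ ^ k.val ≠ 1 := by
      refine hprim.pow_ne_one_of_pos_of_lt ?_ (ZMod.val_lt k)
      exact (Nat.pos_of_ne_zero fun hp => hk ((ZMod.val_eq_zero k).mp hp)).ne'
    rw [geom_sum_eq hne1]
    rw [← pow_mul, mul_comm, pow_mul, hζn, one_pow]
    simp
  -- additivity of the character
  have hχadd : ∀ a b : ZMod n, ζ ^ (a + b).val = ζ ^ a.val * ζ ^ b.val := by
    intro a b
    have : a + b = ((a.val + b.val : ℕ) : ZMod n) := by
      push_cast [ZMod.natCast_rightInverse a, ZMod.natCast_rightInverse b]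
      ring
    rw [this, hpowcast, pow_add]
  -- two-variable character sum vanishes
  have key2 : ∀ k m : ZMod n, (k, m) ≠ (0, 0) →
      ∑ p : ZMod n × ZMod n, ζ ^ (k * p.1 + m * p.2).val = 0 := by
    intro k m hkm
    have : ∑ p : ZMod n × ZMod n, ζ ^ (k * p.1 + m * p.2).val
        = (∑ x : ZMod n, ζ ^ (k * x).val) * (∑ y : ZMod n, ζ ^ (m * y).val) := by
      rw [Finset.sum_mul_sum, ← Finset.sum_product']
      rw [show ((Finset.univ : Finset (ZMod n)) ×ˢ (Finset.univ : Finset (ZMod n)))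
          = (Finset.univ : Finset (ZMod n × ZMod n)) from (Finset.univ_product_univ)]
      exact Finset.sum_congr rfl fun p _ => hχadd (k * p.1) (m * p.2)
    rw [this]
    rcases eq_or_ne k 0 with hk | hk
    · have hm : m ≠ 0 := by
        intro hm; exact hkm (by rw [hk, hm])
      rw [key1 m hm, mul_zero]
    · rw [key1 k hk, zero_mul]
  -- projection to two distinct coordinates is a bijection from B
  have himg : ∀ i j : Fin n, i ≠ j → ∀ f : ZMod n × ZMod n → ℂ,
      ∑ b ∈ B, f (b i, b j) = ∑ p : ZMod n × ZMod n, f p := by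
    intro i j hij f
    have hinj : ∀ b ∈ B, ∀ b' ∈ B, (b i, b' i) = (b j, b' j) → True := fun _ _ _ _ _ => trivial
    have hinj2 : ∀ b ∈ B, ∀ b' ∈ B,
        (fun b => (b i, b j)) b = (fun b => (b i, b j)) b' → b = b' := by
      intro b hb b' hb' heq
      by_contra hne
      have h1 : b i - b' i = 0 := by
        have := congrArg Prod.fst heq; simp at this; rw [this]; ring
      have h2 : b j - b' j = 0 := by
        have := congrArg Prod.snd heq; simp at this; rw [this]; ring
      have hle := hpc b hb b' hb' hne
      have h2le : 2 ≤ agreeCount b b' := by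
        have hsub : ({i, j} : Finset (Fin n)) ⊆
            Finset.univ.filter fun t => b t - b' t = 0 := by
          intro t ht
          simp only [Finset.mem_insert, Finset.mem_singleton] at ht
          rcases ht with rfl | rfl <;> simp [Finset.mem_filter, h1, h2]
        calc 2 = ({i, j} : Finset (Fin n)).card := by rw [Finset.card_insert_of_notMem (by simpa), Finset.card_singleton]
        _ ≤ _ := Finset.card_le_card hsub
      omega
    rw [← Finset.sum_image hinj2]
    have himage : B.image (fun b => (b i, b j)) = Finset.univ := by
      apply Finset.eq_univ_of_card
      rw [Finset.card_image_of_injOn hinj2, hcard]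
      simp [ZMod.card]
      ring
    rw [himage]
  -- the sum of h over B is zero, by span induction
  have hzero0 : ∀ f, f ∈ Submodule.span ℂ (
        {f : (Fin n → ZMod n) → ℂ | ∃ i j : Fin n, ∃ k m : ZMod n,
            i ≠ j ∧ (k, m) ≠ (0, 0) ∧ f = fun z => ζ ^ (k * z i + m * z j).val} ∪
        {f : (Fin n → ZMod n) → ℂ | ∃ j : Fin n, ∃ m : ZMod n,
            m ≠ 0 ∧ f = fun z => ζ ^ (m * z j).val}) → ∑ b ∈ B, f b = 0 := by
    intro f₀ hf₀
    induction hf₀ using Submodule.span_induction with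
    | mem f hf =>
      rcases hf with ⟨i, j, k, m, hij, hkm, rfl⟩ | ⟨j, m, hm, rfl⟩
      · exact (himg i j hij fun p => ζ ^ (k * p.1 + m * p.2).val).trans (key2 k m hkm)
      · have hn2 : 2 ≤ n := by
          by_contra hlt
          have hn1 : n = 1 := by omega
          apply hm
          subst hn1
          exact Subsingleton.elim m 0
        obtain ⟨i, hij⟩ : ∃ i : Fin n, i ≠ j := by
          have : 1 < Fintype.card (Fin n) := by rw [Fintype.card_fin]; omega
          exact Fintype.exists_ne_of_one_lt_card this j
        have heq : (fun z : Fin n → ZMod n => ζ ^ (m * z j).val)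
            = fun z => ζ ^ ((0 : ZMod n) * z i + m * z j).val := by
          funext z; rw [zero_mul, zero_add]
        rw [heq]
        refine (himg i j hij fun p => ζ ^ ((0 : ZMod n) * p.1 + m * p.2).val).trans ?_
        exact key2 0 m (by simp [hm])
    | zero => simp
    | add f g _ _ hf hg => simp [Finset.sum_add_distrib, hf, hg]
    | smul c f _ hf => simp [← Finset.mul_sum, hf]
  have hzero : ∑ b ∈ B, h b = 0 := hzero0 h hspan
  -- split the sum over B into B₀ and the rest
  have hsplit : ∑ b ∈ B, h b = ∑ v ∈ B₀, h v + ∑ d ∈ B \ B₀, h d := by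
    rw [← Finset.sum_sdiff hB₀B]; ring
  have hs_nonneg : (0 : ℂ) ≤ ∑ d ∈ B \ B₀, h d := by
    apply Finset.sum_nonneg
    intro d hd
    apply hpos
    rw [hD]
    intro v hv
    have hdB : d ∈ B := (Finset.mem_sdiff.mp hd).1
    have hdn : d ∉ B₀ := (Finset.mem_sdiff.mp hd).2
    have hne : d ≠ v := fun hdv => hdn (hdv ▸ hv)
    exact hpc d hdB v (hB₀B hv) hne
  rw [hzero, hsum] at hsplit
  have hsval : ∑ d ∈ B \ B₀, h d = -1 := by linear_combination -hsplit
  rw [hsval] at hs_nonneg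
  have := hs_nonneg.1
  simp at this
  linarith
end

section
/- For any types P and L equipped with a membership relation making (P, L) a projective plane in which P and L are finite (nondegenerate: there exist four points no three of which are collinear), the order of the projective plane is not equal to 6. -/
open Finset

section NumberTheory

lemma zmod3_aux : ∀ x y : ZMod 3, x^2 + y^2 = 0 → x = 0 ∧ y = 0 := by decide

lemma descent6 : ∀ n : ℕ, ∀ e d f : ℤ, e.natAbs = n → 6 * e^2 = d^2 + f^2 → e = 0 := by
  intro n
  induction n using Nat.strong_induction_on with
  | _ n ih =>
    intro e d f hn h
    have h3 : ((d : ZMod 3))^2 + (f : ZMod 3)^2 = 0 := by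
      have h' := congrArg (Int.cast : ℤ → ZMod 3) h
      push_cast at h'
      have h6 : (6 : ZMod 3) = 0 := by decide
      rw [h6, zero_mul] at h'
      exact h'.symm
    obtain ⟨hd0, hf0⟩ := zmod3_aux _ _ h3
    have hd : (3 : ℤ) ∣ d := by
      exact_mod_cast (ZMod.intCast_zmod_eq_zero_iff_dvd d 3).mp hd0
    have hf : (3 : ℤ) ∣ f := by
      exact_mod_cast (ZMod.intCast_zmod_eq_zero_iff_dvd f 3).mp hf0
    obtain ⟨d', rfl⟩ := hd
    obtain ⟨f', rfl⟩ := hf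
    have he3 : (3 : ℤ) ∣ e := by
      have h32 : (3 : ℤ) ∣ 2 * e^2 := ⟨d'^2 + f'^2, by linarith⟩
      have hp : Prime (3 : ℤ) := Int.prime_three
      rcases hp.dvd_mul.mp h32 with h1 | h2
      · norm_num at h1
      · exact hp.dvd_of_dvd_pow h2
    obtain ⟨e', rfl⟩ := he3
    have h' : 6 * e'^2 = d'^2 + f'^2 := by linarith
    rcases eq_or_ne e' 0 with rfl | hne
    · simp
    · have hlt : e'.natAbs < n := by
        have h1 : n = 3 * e'.natAbs := by
          rw [← hn, Int.natAbs_mul]; norm_num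
        have h2 : e'.natAbs ≠ 0 := Int.natAbs_ne_zero.mpr hne
        omega
      have := ih e'.natAbs hlt e' d' f' rfl h'
      simp [this]

lemma six_not_sum : ∀ a b : ℚ, 6 * a^2 ≠ 1 + b^2 := by
  intro a b h
  have key : (6 : ℚ) * ((a.num : ℚ) * (b.den : ℚ))^2
      = ((a.den : ℚ) * (b.den : ℚ))^2 + ((b.num : ℚ) * (a.den : ℚ))^2 := by
    have ha : (a.num : ℚ) = a * (a.den : ℚ) := by
      have h0 : ((a.den : ℚ)) ≠ 0 := by exact_mod_cast a.den_nz
      calc (a.num : ℚ) = (a.num / a.den : ℚ) * a.den := (div_mul_cancel₀ _ h0).symm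
        _ = a * a.den := by rw [Rat.num_div_den]
    have hb : (b.num : ℚ) = b * (b.den : ℚ) := by
      have h0 : ((b.den : ℚ)) ≠ 0 := by exact_mod_cast b.den_nz
      calc (b.num : ℚ) = (b.num / b.den : ℚ) * b.den := (div_mul_cancel₀ _ h0).symm
        _ = b * b.den := by rw [Rat.num_div_den]
    rw [ha, hb]
    linear_combination ((a.den : ℚ) * (b.den : ℚ))^2 * h
  have keyz : 6 * (a.num * (b.den : ℤ))^2
      = ((a.den : ℤ) * (b.den : ℤ))^2 + (b.num * (a.den : ℤ))^2 := by
    exact_mod_cast key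
  have := descent6 _ (a.num * (b.den : ℤ)) _ _ rfl keyz
  have hb0 : (b.den : ℤ) ≠ 0 := by positivity
  have ha0 : a.num = 0 := by
    rcases mul_eq_zero.mp this with h1 | h1
    · exact h1
    · exact absurd h1 hb0
  have : a = 0 := Rat.num_eq_zero.mp ha0
  rw [this] at h
  nlinarith [sq_nonneg b]

end NumberTheory

section BlockMatrix

def Bq : Fin 4 → Fin 4 → ℚ :=
  ![![2,1,1,0], ![-1,2,0,1], ![-1,0,2,-1], ![0,-1,1,2]]

lemma Bq_fact : ∀ a b : Fin 4, ∑ r : Fin 4, Bq a r * Bq b r = if a = b then 6 else 0 := by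
  intro a b
  fin_cases a <;> fin_cases b <;>
    simp [Bq, Fin.sum_univ_four] <;> norm_num

def blockEquiv : Fin 11 × Fin 4 ≃ Fin 44 where
  toFun p := ⟨4 * (p.1 : ℕ) + (p.2 : ℕ), by omega⟩
  invFun j := (⟨(j : ℕ) / 4, by omega⟩, ⟨(j : ℕ) % 4, by omega⟩)
  left_inv p := by
    have h2 := p.2.isLt
    ext <;> simp <;> omega
  right_inv j := by
    ext; simp; omega

def Cp : (Fin 11 × Fin 4) → (Fin 11 × Fin 4) → ℚ := fun u v =>
  if u.1 = v.1 then Bq u.2 v.2 else 0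

lemma Cp_fact (u v : Fin 11 × Fin 4) :
    ∑ p : Fin 11 × Fin 4, Cp u p * Cp v p = if u = v then 6 else 0 := by
  obtain ⟨a, r⟩ := u
  obtain ⟨b, s⟩ := v
  rw [Fintype.sum_prod_type]
  by_cases hab : a = b
  · subst hab
    rw [Finset.sum_eq_single a]
    · simp only [Cp, eq_self_iff_true, if_true]
      rw [Bq_fact]
      by_cases hrs : r = s
      · subst hrs; simp
      · rw [if_neg hrs, if_neg (by simp [hrs])]
    · intro c _ hc
      apply Finset.sum_eq_zero
      intro t _
      simp only [Cp]
      rw [if_neg (by exact fun h => hc h.symm), zero_mul]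
    · intro h; exact absurd (Finset.mem_univ _) h
  · rw [if_neg (by simp [hab])]
    apply Finset.sum_eq_zero
    intro c _
    apply Finset.sum_eq_zero
    intro t _
    simp only [Cp]
    by_cases hbc : b = c
    · subst hbc
      rw [if_neg hab, zero_mul]
    · rw [if_neg hbc, mul_zero]

def Cq : Fin 44 → Fin 44 → ℚ := fun i j =>
  Cp (blockEquiv.symm i) (blockEquiv.symm j)

lemma Cq_fact (i k : Fin 44) : ∑ j : Fin 44, Cq i j * Cq k j = if i = k then 6 else 0 := by
  have h1 : ∑ j : Fin 44, Cq i j * Cq k j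
      = ∑ p : Fin 11 × Fin 4, Cp (blockEquiv.symm i) p * Cp (blockEquiv.symm k) p := by
    apply Fintype.sum_equiv blockEquiv.symm
    intro j
    rfl
  rw [h1, Cp_fact]
  by_cases h : i = k
  · simp [h]
  · rw [if_neg (by simp [h]), if_neg h]

end BlockMatrix

section Xlin

abbrev V44 := Fin 44 → ℚ

def xlin : V44 →ₗ[ℚ] V44 where
  toFun y := fun j => 6⁻¹ * ∑ i : Fin 44, Cq i j * y i
  map_add' y z := by
    funext j
    have h : ∑ i : Fin 44, Cq i j * (y + z) i
        = ∑ i : Fin 44, Cq i j * y i + ∑ i : Fin 44, Cq i j * z i := by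
      rw [← Finset.sum_add_distrib]
      exact Finset.sum_congr rfl (fun i _ => by simp [mul_add])
    show 6⁻¹ * ∑ i : Fin 44, Cq i j * (y + z) i = _
    rw [h]
    show _ = 6⁻¹ * ∑ i : Fin 44, Cq i j * y i + 6⁻¹ * ∑ i : Fin 44, Cq i j * z i
    ring
  map_smul' a y := by
    funext j
    have h : ∑ i : Fin 44, Cq i j * (a • y) i = a * ∑ i : Fin 44, Cq i j * y i := by
      rw [Finset.mul_sum]
      exact Finset.sum_congr rfl (fun i _ => by simp [smul_eq_mul]; ring)
    show 6⁻¹ * ∑ i : Fin 44, Cq i j * (a • y) i = _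
    rw [h]
    show _ = a * (6⁻¹ * ∑ i : Fin 44, Cq i j * y i)
    ring

lemma xlin_apply (y : V44) (j : Fin 44) : xlin y j = 6⁻¹ * ∑ i : Fin 44, Cq i j * y i := rfl

lemma xlin_norm (y : V44) : 6 * ∑ j : Fin 44, (xlin y j)^2 = ∑ j : Fin 44, (y j)^2 := by
  have h1 : ∀ j : Fin 44, (xlin y j)^2
      = 6⁻¹ * 6⁻¹ * ∑ i : Fin 44, ∑ k : Fin 44, (Cq i j * Cq k j) * (y i * y k) :=
    fun j =>
    calc (xlin y j)^2
        = 6⁻¹ * 6⁻¹ * ((∑ i : Fin 44, Cq i j * y i) * (∑ k : Fin 44, Cq k j * y k)) := by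
          rw [xlin_apply]; ring
      _ = 6⁻¹ * 6⁻¹ * (∑ i : Fin 44, ∑ k : Fin 44, (Cq i j * y i) * (Cq k j * y k)) := by
          rw [Finset.sum_mul_sum]
      _ = 6⁻¹ * 6⁻¹ * (∑ i : Fin 44, ∑ k : Fin 44, (Cq i j * Cq k j) * (y i * y k)) := by
          congr 1
          exact Finset.sum_congr rfl fun i _ => Finset.sum_congr rfl fun k _ => by ring
  rw [Finset.sum_congr rfl (fun j _ => h1 j), ← Finset.mul_sum]
  have h2 : ∑ j : Fin 44, ∑ i : Fin 44, ∑ k : Fin 44, (Cq i j * Cq k j) * (y i * y k)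
      = ∑ i : Fin 44, ∑ k : Fin 44, (∑ j : Fin 44, Cq i j * Cq k j) * (y i * y k) := by
    rw [Finset.sum_comm]
    apply Finset.sum_congr rfl; intro i _
    rw [Finset.sum_comm]
    apply Finset.sum_congr rfl; intro k _
    rw [Finset.sum_mul]
  have h3 : ∑ i : Fin 44, ∑ k : Fin 44, (∑ j : Fin 44, Cq i j * Cq k j) * (y i * y k)
      = ∑ i : Fin 44, 6 * (y i * y i) := by
    apply Finset.sum_congr rfl; intro i _
    calc ∑ k : Fin 44, (∑ j : Fin 44, Cq i j * Cq k j) * (y i * y k)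
        = ∑ k : Fin 44, (if i = k then (6:ℚ) else 0) * (y i * y k) :=
          Finset.sum_congr rfl fun k _ => by rw [Cq_fact]
      _ = ∑ k : Fin 44, (if i = k then 6 * (y i * y k) else 0) :=
          Finset.sum_congr rfl fun k _ => by split_ifs <;> simp
      _ = 6 * (y i * y i) := by rw [Finset.sum_ite_eq]; simp
  have h4 : ∑ i : Fin 44, 6 * (y i * y i) = 6 * ∑ i : Fin 44, (y i)^2 := by
    rw [Finset.mul_sum]
    exact Finset.sum_congr rfl fun i _ => by ring
  rw [h2, h3, h4]
  ring

end Xlin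

section Elimination

lemma hall_elim (M : Fin 43 → (V44 →ₗ[ℚ] ℚ)) (s w : V44 →ₗ[ℚ] ℚ)
    (H : ∀ z : V44, ∑ i : Fin 43, (M i z)^2 + 6 * (s z)^2
      = ∑ j : Fin 44, (z j)^2 + (w z)^2) :
    ∀ k : ℕ, k ≤ 43 → ∃ T : V44 →ₗ[ℚ] V44,
      (∀ z : V44, ∀ j : Fin 44, k ≤ (j : ℕ) → T z j = z j) ∧
      (∀ z : V44, (∀ j : Fin 44, (j : ℕ) < k → z j = 0) →
        ∑ i ∈ Finset.univ.filter (fun i : Fin 43 => k ≤ (i : ℕ)), (M i (T z))^2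
          + 6 * (s (T z))^2
          = ∑ j : Fin 44, (z j)^2 + (w (T z))^2) := by
  intro k
  induction k with
  | zero =>
    intro _
    refine ⟨LinearMap.id, fun z j _ => rfl, fun z _ => ?_⟩
    have : Finset.univ.filter (fun i : Fin 43 => 0 ≤ (i : ℕ)) = Finset.univ := by
      apply Finset.filter_true_of_mem; intro i _; omega
    rw [this]
    simpa using H z
  | succ k ih =>
    intro hk1
    obtain ⟨T, hT1, hT2⟩ := ih (by omega)
    have hk43 : k < 43 := by omega
    set ik : Fin 43 := ⟨k, hk43⟩ with hik
    set jk : Fin 44 := ⟨k, by omega⟩ with hjk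
    set c : ℚ := M ik (T (Pi.single jk 1)) with hc
    set ε : ℚ := if c = 1 then -1 else 1 with hε
    have hεc : ε - c ≠ 0 := by
      by_cases h : c = 1
      · rw [hε, if_pos h, h]; norm_num
      · rw [hε, if_neg h]
        intro h0
        exact h (by linarith)
    have hε2 : ε^2 = 1 := by
      by_cases h : c = 1
      · rw [hε, if_pos h]; norm_num
      · rw [hε, if_neg h]; norm_num
    set ρ : V44 →ₗ[ℚ] ℚ := (ε - c)⁻¹ • ((M ik).comp T) with hρ
    have hρz : ∀ z, ρ z = (ε - c)⁻¹ * (M ik (T z)) := fun z => rfl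
    set S : V44 →ₗ[ℚ] V44 :=
      LinearMap.id + (LinearMap.toSpanSingleton ℚ V44 (Pi.single jk 1)).comp ρ with hS
    have hSz : ∀ z : V44, S z = z + ρ z • (Pi.single jk 1 : V44) := fun z => rfl
    have hSzj : ∀ z : V44, ∀ j : Fin 44, j ≠ jk → S z j = z j := by
      intro z j hj
      rw [hSz]
      simp [Pi.single_eq_of_ne hj]
    have hSzk : ∀ z : V44, S z jk = z jk + ρ z := by
      intro z
      rw [hSz]
      simp [Pi.single_eq_same]
    refine ⟨T.comp S, ?_, ?_⟩
    · intro z j hj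
      have hjne : j ≠ jk := by
        intro h
        rw [h] at hj
        have : (jk : ℕ) = k := rfl
        omega
      rw [LinearMap.comp_apply, hT1 (S z) j (by omega), hSzj z j hjne]
    · intro z hz
      have hzk : z jk = 0 := hz jk (by
        have : (jk : ℕ) = k := rfl
        omega)
      have hSsupp : ∀ j : Fin 44, (j : ℕ) < k → S z j = 0 := by
        intro j hj
        have hjne : j ≠ jk := by
          intro h
          rw [h] at hj
          have : (jk : ℕ) = k := rfl
          omega
        rw [hSzj z j hjne]
        exact hz j (by omega)
      have hmain := hT2 (S z) hSsupp
      -- compute M ik (T (S z)) = ε * ρ z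
      have hTS : T (S z) = T z + ρ z • T (Pi.single jk 1) := by
        rw [hSz, map_add, map_smul]
      have hMik : M ik (T (S z)) = ε * ρ z := by
        rw [hTS, map_add, map_smul, smul_eq_mul, ← hc]
        rw [hρz]
        field_simp
        ring
      -- split the filter sum
      have hsplit : Finset.univ.filter (fun i : Fin 43 => k ≤ (i : ℕ))
          = insert ik (Finset.univ.filter (fun i : Fin 43 => k + 1 ≤ (i : ℕ))) := by
        ext i
        simp only [Finset.mem_filter, Finset.mem_univ, true_and, Finset.mem_insert, Fin.ext_iff,
          hik]
        omega
      have hiknotmem : ik ∉ Finset.univ.filter (fun i : Fin 43 => k + 1 ≤ (i : ℕ)) := by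
        simp [hik]
      rw [hsplit, Finset.sum_insert hiknotmem] at hmain
      -- split RHS sum
      have hrhs : ∑ j : Fin 44, (S z j)^2 = ∑ j : Fin 44, (z j)^2 + (ρ z)^2 := by
        rw [← Finset.sum_erase_add _ _ (Finset.mem_univ jk),
          ← Finset.sum_erase_add _ (fun j => (z j)^2) (Finset.mem_univ jk)]
        rw [Finset.sum_congr rfl (fun j hj => by
          rw [hSzj z j (Finset.ne_of_mem_erase hj)])]
        rw [hSzk, hzk, zero_add]
        ring
      rw [hrhs] at hmain
      have hMsq : (M ik (T (S z)))^2 = (ρ z)^2 := by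
        rw [hMik, mul_pow, hε2, one_mul]
      rw [hMsq] at hmain
      -- conclude
      have : ∀ i : Fin 43, M i (T.comp S z) = M i (T (S z)) := fun i => rfl
      simp only [LinearMap.comp_apply]
      linarith [hmain]

lemma hall_final (M : Fin 43 → (V44 →ₗ[ℚ] ℚ)) (s w : V44 →ₗ[ℚ] ℚ)
    (H : ∀ z : V44, ∑ i : Fin 43, (M i z)^2 + 6 * (s z)^2
      = ∑ j : Fin 44, (z j)^2 + (w z)^2) : False := by
  obtain ⟨T, hT1, hT2⟩ := hall_elim M s w H 43 le_rfl
  set j43 : Fin 44 := ⟨43, by omega⟩ with hj43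
  set z : V44 := Pi.single j43 1 with hzdef
  have hsupp : ∀ j : Fin 44, (j : ℕ) < 43 → z j = 0 := by
    intro j hj
    apply Pi.single_eq_of_ne
    intro h
    rw [h] at hj
    have : (j43 : ℕ) = 43 := rfl
    omega
  have hid := hT2 z hsupp
  have hempty : Finset.univ.filter (fun i : Fin 43 => 43 ≤ (i : ℕ)) = ∅ := by
    apply Finset.filter_eq_empty_iff.mpr
    intro i _
    have := i.isLt
    omega
  rw [hempty, Finset.sum_empty] at hid
  have hsum1 : ∑ j : Fin 44, (z j)^2 = 1 := by
    rw [Finset.sum_eq_single j43]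
    · rw [hzdef]
      rw [Pi.single_eq_same]
      norm_num
    · intro j _ hj
      rw [hzdef, Pi.single_eq_of_ne hj]
      norm_num
    · intro h; exact absurd (Finset.mem_univ _) h
  rw [hsum1] at hid
  exact six_not_sum (s (T z)) (w (T z)) (by linarith)

end Elimination

theorem no_projective_plane_of_order_six (P L : Type*) [Membership P L]
    [Configuration.ProjectivePlane P L] [Fintype P] [Fintype L] :
    Configuration.ProjectivePlane.order P L ≠ 6 := by
  classical
  intro h6
  have hP : Fintype.card P = 43 := by
    rw [Configuration.ProjectivePlane.card_points P L, h6]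
    norm_num
  have hL : Fintype.card L = 43 := by
    rw [Configuration.ProjectivePlane.card_lines P L, h6]
    norm_num
  have eP : P ≃ Fin 43 := Fintype.equivFinOfCardEq hP
  have eL : L ≃ Fin 43 := Fintype.equivFinOfCardEq hL
  -- incidence counting
  have key1 : ∀ p q : P, ∑ l : L, (if p ∈ l then (1:ℚ) else 0) * (if q ∈ l then 1 else 0)
      = if p = q then 7 else 1 := by
    intro p q
    have hterm : ∀ l : L, (if p ∈ l then (1:ℚ) else 0) * (if q ∈ l then 1 else 0)
        = if p ∈ l ∧ q ∈ l then 1 else 0 := by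
      intro l
      by_cases h1 : p ∈ l <;> by_cases h2 : q ∈ l <;> simp [h1, h2]
    rw [Finset.sum_congr rfl (fun l _ => hterm l), Finset.sum_boole]
    by_cases hpq : p = q
    · subst hpq
      rw [if_pos rfl]
      have h1 : Finset.univ.filter (fun l : L => p ∈ l ∧ p ∈ l)
          = Finset.univ.filter (fun l : L => p ∈ l) := by
        ext l; simp
    -- lineCount L p = 7
      have h2 := Configuration.ProjectivePlane.lineCount_eq L p
      rw [h6] at h2
      rw [Configuration.lineCount, Nat.card_eq_fintype_card, Fintype.card_subtype] at h2
      rw [h1, h2]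
      norm_num
    · rw [if_neg hpq]
      obtain ⟨l₀, hl₀, huniq⟩ := Configuration.HasLines.existsUnique_line P L p q hpq
      have hcard : (Finset.univ.filter (fun l : L => p ∈ l ∧ q ∈ l)).card = 1 := by
        rw [Finset.card_eq_one]
        refine ⟨l₀, ?_⟩
        ext l
        simp only [Finset.mem_filter, Finset.mem_univ, true_and, Finset.mem_singleton]
        exact ⟨fun h => huniq l h, fun h => h ▸ hl₀⟩
      rw [hcard]
      norm_num
  -- quadratic form identity for the incidence structure
  have key2 : ∀ f : P → ℚ,
      ∑ l : L, (∑ p : P, (if p ∈ l then (1:ℚ) else 0) * f p)^2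
        = 6 * ∑ p : P, (f p)^2 + (∑ p : P, f p)^2 := by
    intro f
    have expand : ∀ l : L, (∑ p : P, (if p ∈ l then (1:ℚ) else 0) * f p)^2
        = ∑ p : P, ∑ q : P,
            ((if p ∈ l then (1:ℚ) else 0) * (if q ∈ l then 1 else 0)) * (f p * f q) := by
      intro l
      rw [sq, Finset.sum_mul_sum]
      exact Finset.sum_congr rfl fun p _ => Finset.sum_congr rfl fun q _ => by ring
    rw [Finset.sum_congr rfl (fun l _ => expand l)]
    rw [Finset.sum_comm]
    rw [Finset.sum_congr rfl (fun p (_ : p ∈ Finset.univ) => Finset.sum_comm)]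
    have hpq : ∀ p q : P, ∑ l : L,
        ((if p ∈ l then (1:ℚ) else 0) * (if q ∈ l then 1 else 0)) * (f p * f q)
        = (if p = q then (7:ℚ) else 1) * (f p * f q) := by
      intro p q
      rw [← Finset.sum_mul, key1]
    rw [Finset.sum_congr rfl (fun p (_ : p ∈ Finset.univ) =>
      Finset.sum_congr rfl (fun q _ => hpq p q))]
    have h1 : ∀ p q : P, (if p = q then (7:ℚ) else 1) * (f p * f q)
        = f p * f q + (if p = q then 6 * (f p)^2 else 0) := by
      intro p q
      by_cases h : p = q
      · subst h; rw [if_pos rfl, if_pos rfl]; ring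
      · rw [if_neg h, if_neg h]; ring
    rw [Finset.sum_congr rfl (fun p (_ : p ∈ Finset.univ) =>
      Finset.sum_congr rfl (fun q _ => h1 p q))]
    rw [Finset.sum_congr rfl (fun p (_ : p ∈ Finset.univ) => Finset.sum_add_distrib)]
    rw [Finset.sum_add_distrib]
    have hA : ∑ p : P, ∑ q : P, f p * f q = (∑ p : P, f p)^2 := by
      rw [sq, Finset.sum_mul_sum]
    have hB : ∑ p : P, ∑ q : P, (if p = q then 6 * (f p)^2 else 0) = 6 * ∑ p : P, (f p)^2 := by
      rw [Finset.mul_sum]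
      apply Finset.sum_congr rfl
      intro p _
      rw [Finset.sum_ite_eq]
      simp
    rw [hA, hB]
    ring
  -- the linear forms
  have main := hall_final
    (fun i : Fin 43 => ∑ p : P,
      (if p ∈ eL.symm i then (1:ℚ) else 0) • ((LinearMap.proj ((eP p).castSucc)).comp xlin))
    ((LinearMap.proj (Fin.last 43)).comp xlin)
    (∑ p : P, (LinearMap.proj ((eP p).castSucc)).comp xlin)
  apply main
  intro y
  set u : P → ℚ := fun p => xlin y ((eP p).castSucc) with hu
  have hMival : ∀ i : Fin 43,
      (∑ p : P, (if p ∈ eL.symm i then (1:ℚ) else 0)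
          • ((LinearMap.proj ((eP p).castSucc) : V44 →ₗ[ℚ] ℚ).comp xlin)) y
      = ∑ p : P, (if p ∈ eL.symm i then (1:ℚ) else 0) * u p := by
    intro i
    rw [LinearMap.sum_apply]
    apply Finset.sum_congr rfl
    intro p _
    rw [LinearMap.smul_apply, LinearMap.comp_apply, smul_eq_mul]
    rfl
  have hwval : (∑ p : P, ((LinearMap.proj ((eP p).castSucc) : V44 →ₗ[ℚ] ℚ)).comp xlin) y
      = ∑ p : P, u p := by
    rw [LinearMap.sum_apply]
    apply Finset.sum_congr rfl
    intro p _
    rw [LinearMap.comp_apply]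
    rfl
  have hsval : ((LinearMap.proj (Fin.last 43) : V44 →ₗ[ℚ] ℚ)).comp xlin y
      = xlin y (Fin.last 43) := rfl
  rw [Finset.sum_congr rfl (fun i (_ : i ∈ Finset.univ) => by rw [hMival i])]
  have hLsum : ∑ i : Fin 43, (∑ p : P, (if p ∈ eL.symm i then (1:ℚ) else 0) * u p)^2
      = ∑ l : L, (∑ p : P, (if p ∈ l then (1:ℚ) else 0) * u p)^2 := by
    refine (Fintype.sum_equiv eL
      (fun l => (∑ p : P, (if p ∈ l then (1:ℚ) else 0) * u p)^2)
      (fun i => (∑ p : P, (if p ∈ eL.symm i then (1:ℚ) else 0) * u p)^2) ?_).symm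
    intro l
    simp only [Equiv.symm_apply_apply]
  rw [hLsum, key2 u, hsval, hwval]
  have hsplit : ∑ j : Fin 44, (xlin y j)^2 = ∑ p : P, (u p)^2 + (xlin y (Fin.last 43))^2 := by
    rw [Fin.sum_univ_castSucc]
    congr 1
    exact (Fintype.sum_equiv eP (fun p => (u p)^2)
      (fun i => (xlin y (Fin.castSucc i))^2) (fun p => rfl)).symm
  have hnorm := xlin_norm y
  linarith
end

section
/- Let n ≥ 2. If there exists a complete set of n - 1 mutually orthogonal Latin squares of order n, then there exists a set B ⊆ (ZMod n)^n of exactly n² vectors with the plane code property. -/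
/-- `S` is a Latin square of order `n`: every row and every column is a
bijection of `Fin n`. -/
def IsLatinSquare {n : ℕ} (S : Fin n → Fin n → Fin n) : Prop :=
  (∀ i, Function.Bijective (fun j => S i j)) ∧
  (∀ j, Function.Bijective (fun i => S i j))

/-- Two Latin squares are orthogonal if all ordered pairs of corresponding
entries are distinct. -/
def IsOrthogonal {n : ℕ} (S₁ S₂ : Fin n → Fin n → Fin n) : Prop :=
  Function.Injective (fun p : Fin n × Fin n => (S₁ p.1 p.2, S₂ p.1 p.2))


theorem plane_code_of_mols (n : ℕ) (hn : 2 ≤ n)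
    (S : Fin (n - 1) → Fin n → Fin n → Fin n)
    (hS : ∀ k, IsLatinSquare (S k))
    (horth : ∀ k l, k ≠ l → IsOrthogonal (S k) (S l)) :
    ∃ B : Finset (Fin n → ZMod n), B.card = n ^ 2 ∧ PlaneCode B := by
  obtain ⟨m, rfl⟩ : ∃ m, n = m + 1 := ⟨n - 1, by omega⟩
  have hm : 0 < m := by omega
  let e : Fin (m + 1) ≃ ZMod (m + 1) := Equiv.refl _
  let v : Fin (m + 1) × Fin (m + 1) → Fin (m + 1) → ZMod (m + 1) :=
    fun p => Fin.cases (e p.1) (fun k => e (S k p.1 p.2))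
  -- key: agreement at a coordinate
  have hagree : ∀ p q : Fin (m + 1) × Fin (m + 1), p ≠ q →
      ∀ s t : Fin (m + 1), v p s = v q s → v p t = v q t → s = t := by
    intro p q hpq s t hs ht
    induction s using Fin.cases with
    | zero =>
      induction t using Fin.cases with
      | zero => rfl
      | succ k =>
        exfalso
        simp only [v, Fin.cases_zero, Fin.cases_succ] at hs ht
        have h1 : p.1 = q.1 := e.injective hs
        have h2 : S k p.1 p.2 = S k q.1 q.2 := e.injective ht
        rw [h1] at h2
        have h3 : p.2 = q.2 := ((hS k).1 q.1).injective h2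
        exact hpq (Prod.ext h1 h3)
    | succ k =>
      induction t using Fin.cases with
      | zero =>
        exfalso
        simp only [v, Fin.cases_zero, Fin.cases_succ] at hs ht
        have h1 : p.1 = q.1 := e.injective ht
        have h2 : S k p.1 p.2 = S k q.1 q.2 := e.injective hs
        rw [h1] at h2
        have h3 : p.2 = q.2 := ((hS k).1 q.1).injective h2
        exact hpq (Prod.ext h1 h3)
      | succ l =>
        by_cases hkl : k = l
        · rw [hkl]
        · exfalso
          simp only [v, Fin.cases_succ] at hs ht
          have h2 : S k p.1 p.2 = S k q.1 q.2 := e.injective hs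
          have h3 : S l p.1 p.2 = S l q.1 q.2 := e.injective ht
          exact hpq (horth k l hkl (Prod.ext h2 h3))
  have hv : Function.Injective v := by
    intro p q h
    by_contra hpq
    have h0 := hagree p q hpq 0 (Fin.succ ⟨0, hm⟩) (congrFun h 0)
      (congrFun h (Fin.succ ⟨0, hm⟩))
    exact absurd h0 (by simp [Fin.ext_iff])
  refine ⟨Finset.image v Finset.univ, ?_, ?_⟩
  · rw [Finset.card_image_of_injective _ hv, Finset.card_univ]
    simp [sq]
  · intro b hb b' hb' hne
    obtain ⟨p, -, rfl⟩ := Finset.mem_image.mp hb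
    obtain ⟨q, -, rfl⟩ := Finset.mem_image.mp hb'
    have hpq : p ≠ q := fun h => hne (by rw [h])
    apply Finset.card_le_one.mpr
    intro s hs t ht
    rw [Finset.mem_filter] at hs ht
    exact hagree p q hpq s t (sub_eq_zero.mp hs.2) (sub_eq_zero.mp ht.2)
end

section
/- Let n ≥ 2 and let B ⊆ (ZMod n)^n be a set of exactly n² vectors with the plane code property. Then for every v ∈ B, there are exactly n - 1 vectors w ∈ B with w ≠ v such that the difference v - w has no coordinate equal to 0. -/
theorem plane_code_parallel_count (n : ℕ) (hn : 2 ≤ n)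
    (B : Finset (Fin n → ZMod n)) (hcard : B.card = n ^ 2) (hB : PlaneCode B)
    (v : Fin n → ZMod n) (hv : v ∈ B) :
    (B.filter fun w => w ≠ v ∧ agreeCount v w = 0).card = n - 1 := by
  classical
  haveI : NeZero n := ⟨by omega⟩
  have hcardZ : Fintype.card (ZMod n) = n := ZMod.card n
  -- each fiber of the i-th coordinate map has at most n elements
  have fiber_le : ∀ (i : Fin n) (a : ZMod n), (B.filter fun w => w i = a).card ≤ n := by
    intro i a
    obtain ⟨j, hj⟩ : ∃ j : Fin n, j ≠ i := by
      rcases Decidable.em (i = ⟨0, by omega⟩) with h | h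
      · exact ⟨⟨1, by omega⟩, by simp [h, Fin.ext_iff]⟩
      · exact ⟨⟨0, by omega⟩, fun hc => h hc.symm⟩
    calc (B.filter fun w => w i = a).card
        ≤ (Finset.univ : Finset (ZMod n)).card := by
          apply Finset.card_le_card_of_injOn (fun w => w j)
            (fun w _ => Finset.mem_univ _)
          intro w hw w' hw' hww'
          simp only [Finset.coe_filter, Set.mem_setOf_eq] at hw hw'
          by_contra hne
          have h1 : agreeCount w w' ≤ 1 := hB w hw.1 w' hw'.1 hne
          have h2 : ({i, j} : Finset (Fin n)) ⊆
              Finset.univ.filter fun k => w k - w' k = 0 := by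
            intro k hk
            simp only [Finset.mem_insert, Finset.mem_singleton] at hk
            rcases hk with rfl | rfl
            · simp [hw.2, hw'.2]
            · simp [sub_eq_zero, hww']
          have h3 := Finset.card_le_card h2
          rw [Finset.card_insert_of_notMem (by simp [Ne.symm hj]),
            Finset.card_singleton] at h3
          unfold agreeCount at h1
          omega
      _ = n := by rw [Finset.card_univ, hcardZ]
  -- the fiber containing v has exactly n elements
  have fiber_eq : ∀ i : Fin n, (B.filter fun w => w i = v i).card = n := by
    intro i
    by_contra hne
    have hlt : (B.filter fun w => w i = v i).card < n :=
      lt_of_le_of_ne (fiber_le i (v i)) hne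
    have hsum : B.card = ∑ a : ZMod n, (B.filter fun w => w i = a).card :=
      Finset.card_eq_sum_card_fiberwise (fun x _ => Finset.mem_univ _)
    have hlt2 : ∑ a : ZMod n, (B.filter fun w => w i = a).card
        < ∑ _a : ZMod n, n :=
      Finset.sum_lt_sum (fun a _ => fiber_le i a) ⟨v i, Finset.mem_univ _, hlt⟩
    rw [Finset.sum_const, Finset.card_univ, hcardZ, smul_eq_mul] at hlt2
    have hfin : n * n < n * n := by
      calc n * n = B.card := by rw [hcard, pow_two]
        _ = ∑ a : ZMod n, (B.filter fun w => w i = a).card := hsum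
        _ < n * n := hlt2
    exact absurd hfin (lt_irrefl _)
  -- removing v, exactly n - 1 other elements agree with v at coordinate i
  have fiber_erase : ∀ i : Fin n,
      ((B.erase v).filter fun w => w i = v i).card = n - 1 := by
    intro i
    have he : (B.erase v).filter (fun w => w i = v i)
        = (B.filter fun w => w i = v i).erase v := by
      ext w
      simp only [Finset.mem_filter, Finset.mem_erase]
      tauto
    rw [he, Finset.card_erase_of_mem (by simp [hv]), fiber_eq i]
  -- double counting
  have key : ∑ w ∈ B.erase v, agreeCount v w = n * (n - 1) := by
    have hswap : ∑ w ∈ B.erase v, agreeCount v w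
        = ∑ i : Fin n, ((B.erase v).filter fun w => v i - w i = 0).card := by
      simp only [agreeCount, Finset.card_filter]
      exact Finset.sum_comm
    refine hswap.trans ?_
    have hfib : ∀ i : Fin n,
        ((B.erase v).filter fun w => v i - w i = 0).card = n - 1 := by
      intro i
      have hq : ((B.erase v).filter fun w => v i - w i = 0)
          = ((B.erase v).filter fun w => w i = v i) := by
        apply Finset.filter_congr
        intro w _
        rw [sub_eq_zero]
        exact ⟨Eq.symm, Eq.symm⟩
      rw [hq, fiber_erase i]
    rw [Finset.sum_congr rfl (fun i _ => hfib i), Finset.sum_const,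
      Finset.card_univ, Fintype.card_fin, smul_eq_mul]
  -- split B.erase v by whether agreeCount is 0
  set S := B.erase v with hS
  have hScard : S.card = n ^ 2 - 1 := by
    rw [hS, Finset.card_erase_of_mem hv, hcard]
  have hsplit := Finset.card_filter_add_card_filter_not
    (s := S) (p := fun w => agreeCount v w = 0)
  have hones : ∀ w ∈ S.filter (fun w => ¬ agreeCount v w = 0),
      agreeCount v w = 1 := by
    intro w hw
    simp only [Finset.mem_filter, hS, Finset.mem_erase] at hw
    have h1 : agreeCount v w ≤ 1 := hB v hv w hw.1.2 (fun h => hw.1.1 h.symm)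
    omega
  have hsum1 : ∑ w ∈ S, agreeCount v w
      = (S.filter (fun w => ¬ agreeCount v w = 0)).card := by
    rw [← Finset.sum_filter_add_sum_filter_not S (fun w => agreeCount v w = 0)]
    have h0 : ∑ w ∈ S.filter (fun w => agreeCount v w = 0), agreeCount v w = 0 :=
      Finset.sum_eq_zero (fun w hw => (Finset.mem_filter.mp hw).2)
    have h1 : ∑ w ∈ S.filter (fun w => ¬ agreeCount v w = 0), agreeCount v w
        = ∑ _w ∈ S.filter (fun w => ¬ agreeCount v w = 0), 1 :=
      Finset.sum_congr rfl hones
    rw [h0, h1, Finset.sum_const, smul_eq_mul, mul_one, zero_add]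
  have h2 : (S.filter (fun w => ¬ agreeCount v w = 0)).card = n * (n - 1) := by
    rw [← hsum1]; exact key
  have hx : (S.filter (fun w => agreeCount v w = 0)).card + n * (n - 1)
      = n ^ 2 - 1 := by rw [← h2, ← hScard]; exact hsplit
  have hy : (n - 1) + n * (n - 1) = n ^ 2 - 1 := by
    obtain ⟨m, rfl⟩ : ∃ m, n = m + 1 := ⟨n - 1, by omega⟩
    have : (m + 1) ^ 2 = (m + (m + 1) * m) + 1 := by ring
    rw [this]
    simp
  have hfinal : (S.filter (fun w => agreeCount v w = 0)).card = n - 1 :=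
    Nat.add_right_cancel (hx.trans hy.symm)
  rw [← hfinal]
  congr 1
  ext w
  simp only [Finset.mem_filter, hS, Finset.mem_erase]
  tauto
end

section
/- Let n ≥ 2. If there exist types P and L with a membership relation making (P, L) a projective plane with P and L finite and of order n, then there exists a set B ⊆ (ZMod n)^n of exactly n² vectors with the plane code property. -/
open Configuration Configuration.ProjectivePlane

theorem plane_code_of_projective_plane (n : ℕ) (hn : 2 ≤ n)
    (P L : Type*) [Membership P L] [Configuration.ProjectivePlane P L]
    [Fintype P] [Fintype L]
    (horder : Configuration.ProjectivePlane.order P L = n) :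
    ∃ B : Finset (Fin n → ZMod n), B.card = n ^ 2 ∧ PlaneCode B := by
  classical
  haveI : NeZero n := ⟨by omega⟩
  -- pick a line
  obtain ⟨p₁, p₂, p₃, l₁, ℓ, l₃, -, -, -, -, -, -, -, -⟩ :=
    Configuration.ProjectivePlane.exists_config (P := P) (L := L)
  -- points on ℓ
  have hSℓ : Fintype.card {p : P // p ∈ ℓ} = n + 1 := by
    have := Configuration.ProjectivePlane.pointCount_eq P ℓ
    rwa [Configuration.pointCount, Nat.card_eq_fintype_card, horder] at this
  -- an injection of Fin n into points of ℓ
  obtain ⟨g⟩ := Fintype.truncEquivFinOfCardEq hSℓ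
  set e : Fin n → {p : P // p ∈ ℓ} := fun i => g.symm (Fin.castSucc i) with he
  have einj : Function.Injective e := fun i j h => by
    simpa using Fin.castSucc_injective n (g.symm.injective h)
  -- lines through a point of ℓ, other than ℓ
  have hT : ∀ i : Fin n,
      Fintype.card {l : L // (e i : P) ∈ l ∧ l ≠ ℓ} = n := by
    intro i
    have h1 : Fintype.card {l : L // (e i : P) ∈ l} = n + 1 := by
      have := Configuration.ProjectivePlane.lineCount_eq L (e i : P)
      rwa [Configuration.lineCount, Nat.card_eq_fintype_card, horder] at this
    have key := Fintype.card_subtype_compl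
      (fun x : {l : L // (e i : P) ∈ l} => x = (⟨ℓ, (e i).2⟩ : {l : L // (e i : P) ∈ l}))
    rw [Fintype.card_subtype_eq, h1] at key
    have equ : {x : {l : L // (e i : P) ∈ l} // ¬ x = ⟨ℓ, (e i).2⟩} ≃
        {l : L // (e i : P) ∈ l ∧ l ≠ ℓ} :=
      (Equiv.subtypeEquivRight (fun x => by
        simp [Subtype.ext_iff])).trans
        (Equiv.subtypeSubtypeEquivSubtypeInter (fun l : L => (e i : P) ∈ l) (fun l => l ≠ ℓ))
    rw [Fintype.card_congr equ.symm, key]; omega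
  -- labels
  have lab : ∀ i : Fin n, {l : L // (e i : P) ∈ l ∧ l ≠ ℓ} ≃ ZMod n := fun i =>
    Fintype.equivOfCardEq (by rw [hT i, ZMod.card])
  -- affine points
  have hA : Fintype.card {a : P // a ∉ ℓ} = n ^ 2 := by
    have := Fintype.card_subtype_compl (fun a : P => a ∈ ℓ)
    rw [hSℓ, Configuration.ProjectivePlane.card_points P L, horder] at this
    rw [this]; ring_nf; omega
  -- the vector map
  have hne : ∀ (a : {a : P // a ∉ ℓ}) (i : Fin n), (e i : P) ≠ (a : P) := by
    intro a i h
    exact a.2 (h ▸ (e i).2)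
  set m : {a : P // a ∉ ℓ} → Fin n → L :=
    fun a i => Configuration.HasLines.mkLine (hne a i) with hm
  have hma : ∀ a i, (a : P) ∈ m a i := fun a i => (Configuration.HasLines.mkLine_ax (hne a i)).2
  have hme : ∀ a i, (e i : P) ∈ m a i := fun a i => (Configuration.HasLines.mkLine_ax (hne a i)).1
  have hmne : ∀ a i, m a i ≠ ℓ := by
    intro a i h
    refine a.2 ?_
    have h2 := hma a i
    rw [h] at h2
    exact h2
  set v : {a : P // a ∉ ℓ} → (Fin n → ZMod n) :=
    fun a i => lab i ⟨m a i, hme a i, hmne a i⟩ with hv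
  -- key: if vectors agree at two distinct coordinates, the points are equal
  have key : ∀ (a b : {a : P // a ∉ ℓ}) (i j : Fin n), i ≠ j →
      v a i = v b i → v a j = v b j → a = b := by
    intro a b i j hij hi hj
    by_cases hab' : (a : P) = (b : P)
    · exact Subtype.ext hab'
    exfalso
    have hmi : m a i = m b i := by simpa [hv] using hi
    have hmj : m a j = m b j := by simpa [hv] using hj
    -- m a i and m a j both contain a and b, so they're equal
    have hbmi : (b : P) ∈ m a i := by rw [hmi]; exact hma b i
    have hbmj : (b : P) ∈ m a j := by rw [hmj]; exact hma b j
    have hline : m a i = m a j :=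
      (Configuration.Nondegenerate.eq_or_eq (hma a i) hbmi (hma a j) hbmj).resolve_left hab'
    -- then m a i contains e i and e j, both on ℓ, so m a i = ℓ
    have heij : (e i : P) ≠ (e j : P) := fun h =>
      hij (einj (Subtype.ext h))
    have : m a i = ℓ :=
      (Configuration.Nondegenerate.eq_or_eq (hme a i) (by rw [hline]; exact hme a j) (e i).2
        (e j).2).resolve_left heij
    exact hmne a i this
  -- injectivity of v
  have vinj : Function.Injective v := by
    intro a b h
    refine key a b ⟨0, by omega⟩ ⟨1, by omega⟩ (by simp [Fin.ext_iff]) ?_ ?_ <;> rw [h]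
  refine ⟨Finset.univ.image v, ?_, ?_⟩
  · rw [Finset.card_image_of_injective _ vinj, Finset.card_univ, hA]
  · intro b hb b' hb' hbb'
    simp only [Finset.mem_image, Finset.mem_univ, true_and] at hb hb'
    obtain ⟨a, rfl⟩ := hb
    obtain ⟨a', rfl⟩ := hb'
    rw [agreeCount]
    refine Finset.card_le_one.mpr ?_
    intro i hi j hj
    simp only [Finset.mem_filter, sub_eq_zero] at hi hj
    by_contra hij
    exact hbb' (congrArg v (key a a' i j hij hi.2 hj.2))
end
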